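/- arXiv:1407.4679 — 5 statements merged into one kernel-verified Lean document; each statement's English description precedes it below -/
import Mathlib

section
/- Let α > 0 and let (a_n) be a sequence of positive reals such that (1/n^α) ∑_{k=1}^n a_k converges to L. Then for every continuous function f on [0,1], (1/n^α) ∑_{k=1}^n f(k/n) a_k converges to L ∫_0^1 α x^(α-1) f(x) dx. -/
open Filter Finset intervalIntegral

lemma int_integrable (α : ℝ) (hα : 0 < α) (f : ℝ → ℝ) (hf : ContinuousOn f (Set.Icc 0 1))
    (c d : ℝ) (h0c : 0 ≤ c) (hcd : c ≤ d) (hd1 : d ≤ 1) :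
    IntervalIntegrable (fun x => α * x ^ (α - 1) * f x) MeasureTheory.volume c d := by
  have h1 : IntervalIntegrable (fun x : ℝ => α * x ^ (α - 1)) MeasureTheory.volume c d :=
    (intervalIntegrable_rpow' (by linarith)).const_mul α
  exact h1.mul_continuousOn (hf.mono (by rw [Set.uIcc_of_le hcd]; exact Set.Icc_subset_Icc h0c hd1))

lemma int_rpow_eq (α : ℝ) (hα : 0 < α) (c d : ℝ) (h0c : 0 ≤ c) (hcd : c ≤ d) :
    ∫ x in c..d, α * x ^ (α - 1) = d ^ α - c ^ α := by
  rw [intervalIntegral.integral_const_mul, integral_rpow (Or.inl (by linarith))]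
  rw [sub_add_cancel]
  field_simp

lemma int_piece (α : ℝ) (hα : 0 < α) (f : ℝ → ℝ) (hf : ContinuousOn f (Set.Icc 0 1))
    (c d p ε : ℝ) (h0c : 0 ≤ c) (hcd : c ≤ d) (hd1 : d ≤ 1)
    (hbd : ∀ x ∈ Set.Icc c d, |f x - p| ≤ ε) :
    |(∫ x in c..d, α * x ^ (α - 1) * f x) - p * (d ^ α - c ^ α)| ≤ ε * (d ^ α - c ^ α) := by
  have hint := int_integrable α hα f hf c d h0c hcd hd1
  have hintc : IntervalIntegrable (fun x : ℝ => α * x ^ (α - 1) * p) MeasureTheory.volume c d :=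
    ((intervalIntegrable_rpow' (r := α - 1) (by linarith)).const_mul α).mul_const p
  have heq : (∫ x in c..d, α * x ^ (α - 1) * f x) - p * (d ^ α - c ^ α)
      = ∫ x in c..d, α * x ^ (α - 1) * (f x - p) := by
    rw [show (fun x : ℝ => α * x ^ (α - 1) * (f x - p))
        = (fun x : ℝ => α * x ^ (α - 1) * f x - α * x ^ (α - 1) * p) from funext fun x => by ring]
    rw [intervalIntegral.integral_sub hint hintc]
    have : (∫ x in c..d, α * x ^ (α - 1) * p) = p * (d ^ α - c ^ α) := by
      rw [show (fun x : ℝ => α * x ^ (α - 1) * p) = (fun x : ℝ => p * (α * x ^ (α - 1)))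
        from funext fun x => by ring, intervalIntegral.integral_const_mul,
        int_rpow_eq α hα c d h0c hcd]
    rw [this]
  rw [heq]
  have key : ‖∫ x in c..d, α * x ^ (α - 1) * (f x - p)‖
      ≤ |∫ x in c..d, ε * (α * x ^ (α - 1))| := by
    apply intervalIntegral.norm_integral_le_abs_of_norm_le
    · rw [Set.uIoc_of_le hcd]
      apply MeasureTheory.ae_restrict_of_forall_mem measurableSet_Ioc
      intro x hx
      have hx0 : 0 ≤ x := le_trans h0c hx.1.le
      have h1 : (0:ℝ) ≤ α * x ^ (α - 1) := by positivity
      rw [Real.norm_eq_abs, abs_mul, abs_of_nonneg h1]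
      have := hbd x ⟨hx.1.le, hx.2⟩
      calc α * x ^ (α - 1) * |f x - p| ≤ α * x ^ (α - 1) * ε :=
            mul_le_mul_of_nonneg_left this h1
        _ = ε * (α * x ^ (α - 1)) := by ring
    · exact ((intervalIntegrable_rpow' (by linarith)).const_mul α).const_mul ε
  rw [Real.norm_eq_abs] at key
  refine key.trans ?_
  rw [intervalIntegral.integral_const_mul, int_rpow_eq α hα c d h0c hcd]
  have hε : 0 ≤ ε := le_trans (abs_nonneg _) (hbd c ⟨le_refl c, hcd⟩)
  have hmono : c ^ α ≤ d ^ α := Real.rpow_le_rpow h0c hcd hα.le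
  rw [abs_of_nonneg (by nlinarith : (0:ℝ) ≤ ε * (d ^ α - c ^ α))]

lemma part_sum (g : ℕ → ℝ) (N : ℕ → ℕ) (hN : Monotone N) (m : ℕ) :
    ∑ j ∈ range m, ∑ k ∈ Ioc (N j) (N (j+1)), g k = ∑ k ∈ Ioc (N 0) (N m) , g k := by
  induction m with
  | zero => simp
  | succ m ih =>
      rw [Finset.sum_range_succ, ih, ← Finset.sum_union ?_, Finset.Ioc_union_Ioc_eq_Ioc
        (hN (Nat.zero_le m)) (hN (Nat.le_succ m))]
      rw [Finset.disjoint_left]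
      intro x hx hx'
      simp only [Finset.mem_Ioc] at hx hx'
      omega

lemma cdf_lim (α : ℝ) (hα : 0 < α) (a : ℕ → ℝ) (L : ℝ)
    (hL : Filter.Tendsto (fun n : ℕ => (1 / (n : ℝ) ^ α) * ∑ k ∈ Finset.Icc 1 n, a k)
      Filter.atTop (nhds L)) (m j : ℕ) (hm : 0 < m) (hj : j ≤ m) :
    Tendsto (fun n : ℕ => (1 / (n : ℝ) ^ α) * ∑ k ∈ Finset.Icc 1 (j * n / m), a k)
      atTop (nhds (L * ((j : ℝ) / m) ^ α)) := by
  rcases Nat.eq_zero_or_pos j with hj0 | hj0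
  · subst hj0
    simp only [Nat.cast_zero, zero_mul, Nat.zero_div, zero_div]
    rw [Real.zero_rpow hα.ne', mul_zero]
    simpa using tendsto_const_nhds
  · have hNtop : Tendsto (fun n : ℕ => j * n / m) atTop atTop := by
      apply tendsto_atTop_atTop.2
      intro b
      refine ⟨b * m, fun n hn => ?_⟩
      exact (Nat.le_div_iff_mul_le hm).2 (le_trans (Nat.le_mul_of_pos_left (b*m) hj0) (Nat.mul_le_mul_left j hn))
    have hratio : Tendsto (fun n : ℕ => ((j * n / m : ℕ) : ℝ) / n) atTop (nhds ((j : ℝ) / m)) := by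
      refine tendsto_of_tendsto_of_tendsto_of_le_of_le'
        (g := fun n : ℕ => (j : ℝ) / m - 1 / n) (h := fun _ => (j : ℝ) / m)
        ?_ tendsto_const_nhds ?_ ?_
      · simpa using tendsto_const_nhds.sub (tendsto_one_div_atTop_nhds_zero_nat : Tendsto (fun n : ℕ => 1 / (n:ℝ)) atTop (nhds 0))
      · filter_upwards [eventually_gt_atTop 0] with n hn
        have hnr : (0 : ℝ) < n := by exact_mod_cast hn
        have hmr : (0 : ℝ) < m := by exact_mod_cast hm
        have keyn : j * n < (j * n / m) * m + m := by
          have h1 := Nat.div_add_mod (j * n) m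
          have h2 := Nat.mod_lt (j * n) hm
          nlinarith [h1, h2]
        have key : (j : ℝ) * n < ((j * n / m : ℕ) : ℝ) * m + m := by exact_mod_cast keyn
        rw [sub_le_iff_le_add, ← add_div, div_le_div_iff₀ hmr hnr]
        nlinarith
      · filter_upwards [eventually_gt_atTop 0] with n hn
        have hnr : (0 : ℝ) < n := by exact_mod_cast hn
        have hmr : (0 : ℝ) < m := by exact_mod_cast hm
        rw [div_le_div_iff₀ hnr hmr]
        have := Nat.div_mul_le_self (j * n) m
        calc ((j * n / m : ℕ) : ℝ) * m = ((j * n / m * m : ℕ) : ℝ) := by push_cast; ring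
          _ ≤ ((j * n : ℕ) : ℝ) := by exact_mod_cast this
          _ = (j : ℝ) * n := by push_cast; ring
    have h1 : Tendsto (fun n : ℕ => ((1 : ℝ) / ((j * n / m : ℕ) : ℝ) ^ α
        * ∑ k ∈ Finset.Icc 1 (j * n / m), a k) * (((j * n / m : ℕ) : ℝ) / n) ^ α)
        atTop (nhds (L * ((j : ℝ) / m) ^ α)) :=
      (hL.comp hNtop).mul (hratio.rpow_const (Or.inr hα.le))
    apply h1.congr'
    filter_upwards [hNtop.eventually_ge_atTop 1, eventually_gt_atTop 0] with n hN1 hn0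
    have hNr : (0 : ℝ) < ((j * n / m : ℕ) : ℝ) := by exact_mod_cast hN1
    have hnr : (0 : ℝ) < n := by exact_mod_cast hn0
    rw [Real.div_rpow hNr.le hnr.le]
    have h2 : (0:ℝ) < ((j * n / m : ℕ) : ℝ) ^ α := Real.rpow_pos_of_pos hNr α
    have h3 : (0:ℝ) < (n:ℝ) ^ α := Real.rpow_pos_of_pos hnr α
    field_simp
open Filter Finset intervalIntegral

lemma sum_Ioc_sub (g : ℕ → ℝ) {b c : ℕ} (h : b ≤ c) :
    ∑ k ∈ Ioc b c, g k = (∑ k ∈ Ioc 0 c, g k) - ∑ k ∈ Ioc 0 b, g k := by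
  have hdisj : Disjoint (Ioc 0 b) (Ioc b c) := by
    rw [Finset.disjoint_left]
    intro x hx hx'
    simp only [Finset.mem_Ioc] at hx hx'
    omega
  have := Finset.sum_union (f := g) hdisj
  rw [Finset.Ioc_union_Ioc_eq_Ioc (Nat.zero_le b) h] at this
  linarith

theorem stmt_0 (α : ℝ) (hα : 0 < α) (a : ℕ → ℝ) (ha : ∀ n, 0 < a n) (L : ℝ)
    (hL : Filter.Tendsto (fun n : ℕ => (1 / (n : ℝ) ^ α) * ∑ k ∈ Finset.Icc 1 n, a k)
      Filter.atTop (nhds L))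
    (f : ℝ → ℝ) (hf : ContinuousOn f (Set.Icc 0 1)) :
    Filter.Tendsto
      (fun n : ℕ => (1 / (n : ℝ) ^ α) * ∑ k ∈ Finset.Icc 1 n, f (k / n) * a k)
      Filter.atTop (nhds (L * ∫ x in (0:ℝ)..1, α * x ^ (α - 1) * f x)) := by
  set I := ∫ x in (0:ℝ)..1, α * x ^ (α - 1) * f x with hI
  rw [Metric.tendsto_atTop]
  intro ε hε
  set ε' := ε / (4 * (|L| + 1)) with hε'def
  have hL1 : (0:ℝ) < |L| + 1 := by positivity
  have hε' : 0 < ε' := by positivity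
  -- uniform continuity
  have hunif : UniformContinuousOn f (Set.Icc 0 1) :=
    isCompact_Icc.uniformContinuousOn_of_continuous hf
  obtain ⟨δ, hδpos, hδ⟩ := (Metric.uniformContinuousOn_iff.1 hunif) ε' hε'
  -- choose m
  obtain ⟨m, hmgt⟩ := exists_nat_gt (1 / δ)
  have hm : 0 < m := by
    by_contra h
    push_neg at h
    interval_cases m
    simp at hmgt
    have : 0 < 1/δ := by positivity
    linarith
  have hmr : (0:ℝ) < m := by exact_mod_cast hm
  have hinvm : 1 / (m:ℝ) < δ := by
    rw [div_lt_iff₀ hmr]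
    rw [div_lt_iff₀ hδpos] at hmgt
    linarith
  -- the step points
  have hclose : ∀ x ∈ Set.Icc (0:ℝ) 1, ∀ y ∈ Set.Icc (0:ℝ) 1, |x - y| ≤ 1/(m:ℝ) →
      |f x - f y| ≤ ε' := by
    intro x hx y hy hxy
    have := hδ x hx y hy (by rw [Real.dist_eq]; linarith)
    rw [Real.dist_eq] at this
    linarith
  -- partition points
  set c : ℕ → ℝ := fun j => (j:ℝ)/m with hc
  have hc0 : c 0 = 0 := by simp [hc]
  have hcm : c m = 1 := by simp [hc]; exact hm.ne'
  have hcnn : ∀ j : ℕ, 0 ≤ c j := fun j => by positivity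
  have hcmono : ∀ j k : ℕ, j ≤ k → c j ≤ c k := by
    intro j k hjk
    have hjk' : (j:ℝ) ≤ k := by exact_mod_cast hjk
    simp only [hc]
    gcongr
  have hcle1 : ∀ j : ℕ, j ≤ m → c j ≤ 1 := by
    intro j hj
    rw [← hcm]
    exact hcmono j m hj
  have hcdiff : ∀ j : ℕ, c (j+1) - c j = 1/(m:ℝ) := by
    intro j
    simp only [hc]
    push_cast
    field_simp
    ring
  -- split the integral
  have hIsplit : I = ∑ j ∈ range m, ∫ x in c j..c (j+1), α * x ^ (α-1) * f x := by
    rw [hI, intervalIntegral.sum_integral_adjacent_intervals (a := c) (n := m)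
      (fun k hk => int_integrable α hα f hf _ _ (hcnn k) (hcmono k (k+1) (Nat.le_succ k))
        (hcle1 (k+1) hk)), hc0, hcm]
  set Lg := ∑ j ∈ range m, f (c (j+1)) * (c (j+1) ^ α - c j ^ α) with hLgdef
  -- step approximation of the integral
  have hLgI : |Lg - I| ≤ ε' := by
    rw [hIsplit, hLgdef, ← Finset.sum_sub_distrib]
    refine (Finset.abs_sum_le_sum_abs _ _).trans ?_
    have hterm : ∀ j ∈ range m, |f (c (j+1)) * (c (j+1) ^ α - c j ^ α)
        - ∫ x in c j..c (j+1), α * x ^ (α-1) * f x| ≤ ε' * (c (j+1) ^ α - c j ^ α) := by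
      intro j hj
      rw [abs_sub_comm]
      apply int_piece α hα f hf _ _ _ _ (hcnn j) (hcmono j (j+1) (Nat.le_succ j))
        (hcle1 (j+1) (Finset.mem_range.1 hj))
      intro x hx
      have hx01 : x ∈ Set.Icc (0:ℝ) 1 :=
        ⟨le_trans (hcnn j) hx.1, le_trans hx.2 (hcle1 (j+1) (Finset.mem_range.1 hj))⟩
      have hcj1 : c (j+1) ∈ Set.Icc (0:ℝ) 1 := ⟨hcnn _, hcle1 (j+1) (Finset.mem_range.1 hj)⟩
      apply hclose x hx01 _ hcj1
      rw [abs_sub_comm, abs_of_nonneg (by linarith [hx.2] : (0:ℝ) ≤ c (j+1) - x)]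
      linarith [hcdiff j, hx.1]
    refine (Finset.sum_le_sum hterm).trans ?_
    rw [← Finset.mul_sum, Finset.sum_range_sub (fun j => c j ^ α), hc0, hcm,
      Real.one_rpow, Real.zero_rpow hα.ne', sub_zero, mul_one]
  -- limit of the step sums
  have hBlim : Tendsto (fun n : ℕ => ∑ j ∈ range m, f (c (j+1)) *
      ((1/(n:ℝ)^α) * (∑ k ∈ Finset.Icc 1 ((j+1)*n/m), a k)
        - (1/(n:ℝ)^α) * (∑ k ∈ Finset.Icc 1 (j*n/m), a k)))
      atTop (nhds (L * Lg)) := by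
    have h1 : Tendsto (fun n : ℕ => ∑ j ∈ range m, f (c (j+1)) *
        ((1/(n:ℝ)^α) * (∑ k ∈ Finset.Icc 1 ((j+1)*n/m), a k)
          - (1/(n:ℝ)^α) * (∑ k ∈ Finset.Icc 1 (j*n/m), a k)))
        atTop (nhds (∑ j ∈ range m, f (c (j+1)) *
          (L * (((j+1 : ℕ) : ℝ)/m) ^ α - L * (((j : ℕ) : ℝ)/m) ^ α))) := by
      apply tendsto_finset_sum
      intro j hj
      have hjm := Finset.mem_range.1 hj
      exact ((cdf_lim α hα a L hL m (j+1) hm hjm).sub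
        (cdf_lim α hα a L hL m j hm hjm.le)).const_mul _
    have h2 : (∑ j ∈ range m, f (c (j+1)) *
        (L * (((j+1 : ℕ) : ℝ)/m) ^ α - L * (((j : ℕ) : ℝ)/m) ^ α)) = L * Lg := by
      rw [hLgdef, Finset.mul_sum]
      apply Finset.sum_congr rfl
      intro j _
      simp only [hc]
      push_cast
      ring
    rwa [h2] at h1
  -- bound on |A n - B n|
  have hABn : ∀ n : ℕ, 1 ≤ n →
      |((1/(n:ℝ)^α) * ∑ k ∈ Finset.Icc 1 n, f (k/n) * a k)
        - ∑ j ∈ range m, f (c (j+1)) *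
          ((1/(n:ℝ)^α) * (∑ k ∈ Finset.Icc 1 ((j+1)*n/m), a k)
            - (1/(n:ℝ)^α) * (∑ k ∈ Finset.Icc 1 (j*n/m), a k))|
      ≤ ε' * ((1/(n:ℝ)^α) * ∑ k ∈ Finset.Icc 1 n, a k) := by
    intro n hn
    have hnr : (0:ℝ) < n := by exact_mod_cast hn
    have hnα : (0:ℝ) < (n:ℝ)^α := Real.rpow_pos_of_pos hnr α
    have hNmono : Monotone (fun j : ℕ => j*n/m) := fun j k hjk =>
      Nat.div_le_div_right (Nat.mul_le_mul_right n hjk)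
    have hIcc : ∀ p : ℕ, Finset.Icc 1 p = Finset.Ioc 0 p := fun p => rfl
    have hNm : m * n / m = n := Nat.mul_div_cancel_left n hm
    have hpart : ∀ g : ℕ → ℝ, ∑ k ∈ Finset.Icc 1 n, g k
        = ∑ j ∈ range m, ∑ k ∈ Ioc (j*n/m) ((j+1)*n/m), g k := by
      intro g
      rw [part_sum g (fun j => j*n/m) hNmono m]
      simp only [Nat.zero_mul, Nat.zero_div, hNm, hIcc]
    have hSdiff : ∀ j : ℕ, (∑ k ∈ Finset.Icc 1 ((j+1)*n/m), a k)
        - (∑ k ∈ Finset.Icc 1 (j*n/m), a k) = ∑ k ∈ Ioc (j*n/m) ((j+1)*n/m), a k := by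
      intro j
      rw [hIcc, hIcc, sum_Ioc_sub a (hNmono (Nat.le_succ j))]
    have key : ((1/(n:ℝ)^α) * ∑ k ∈ Finset.Icc 1 n, f (k/n) * a k)
        - ∑ j ∈ range m, f (c (j+1)) *
          ((1/(n:ℝ)^α) * (∑ k ∈ Finset.Icc 1 ((j+1)*n/m), a k)
            - (1/(n:ℝ)^α) * (∑ k ∈ Finset.Icc 1 (j*n/m), a k))
        = (1/(n:ℝ)^α) * ∑ j ∈ range m, ∑ k ∈ Ioc (j*n/m) ((j+1)*n/m),
            (f (k/n) - f (c (j+1))) * a k := by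
      rw [hpart (fun k => f (k/n) * a k), Finset.mul_sum, Finset.mul_sum,
        ← Finset.sum_sub_distrib]
      apply Finset.sum_congr rfl
      intro j _
      have : (1/(n:ℝ)^α) * (∑ k ∈ Finset.Icc 1 ((j+1)*n/m), a k)
            - (1/(n:ℝ)^α) * (∑ k ∈ Finset.Icc 1 (j*n/m), a k)
          = (1/(n:ℝ)^α) * ∑ k ∈ Ioc (j*n/m) ((j+1)*n/m), a k := by
        rw [← mul_sub, hSdiff j]
      rw [this]
      have expand : ∑ k ∈ Ioc (j*n/m) ((j+1)*n/m), (f ((k:ℝ)/n) - f (c (j+1))) * a k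
          = (∑ k ∈ Ioc (j*n/m) ((j+1)*n/m), f ((k:ℝ)/n) * a k)
            - f (c (j+1)) * ∑ k ∈ Ioc (j*n/m) ((j+1)*n/m), a k := by
        rw [Finset.mul_sum, ← Finset.sum_sub_distrib]
        exact Finset.sum_congr rfl fun k _ => by ring
      rw [expand]
      ring
    rw [key, abs_mul, abs_of_nonneg (by positivity : (0:ℝ) ≤ 1/(n:ℝ)^α)]
    have hbound : |∑ j ∈ range m, ∑ k ∈ Ioc (j*n/m) ((j+1)*n/m),
        (f (k/n) - f (c (j+1))) * a k| ≤ ε' * ∑ k ∈ Finset.Icc 1 n, a k := by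
      refine (Finset.abs_sum_le_sum_abs _ _).trans ?_
      have step : ∀ j ∈ range m, |∑ k ∈ Ioc (j*n/m) ((j+1)*n/m),
          (f (k/n) - f (c (j+1))) * a k| ≤ ∑ k ∈ Ioc (j*n/m) ((j+1)*n/m), ε' * a k := by
        intro j hj
        have hjm := Finset.mem_range.1 hj
        refine (Finset.abs_sum_le_sum_abs _ _).trans (Finset.sum_le_sum ?_)
        intro k hk
        rw [Finset.mem_Ioc] at hk
        have hkn : k ≤ n := by
          refine hk.2.trans ?_
          calc (j+1)*n/m ≤ m*n/m := Nat.div_le_div_right (Nat.mul_le_mul_right n hjm)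
            _ = n := hNm
        have hkm1 : (k:ℝ) * m ≤ ((j:ℝ)+1) * n := by
          have := (Nat.le_div_iff_mul_le hm).1 hk.2
          exact_mod_cast this
        have hkm2 : (j:ℝ) * n < (k:ℝ) * m := by
          have := (Nat.div_lt_iff_lt_mul hm).1 hk.1
          exact_mod_cast this
        have hkn1 : (k:ℝ)/n ≤ 1 := by
          rw [div_le_one hnr]; exact_mod_cast hkn
        have hknIcc : (k:ℝ)/n ∈ Set.Icc (0:ℝ) 1 := ⟨by positivity, hkn1⟩
        have hcIcc : c (j+1) ∈ Set.Icc (0:ℝ) 1 := ⟨hcnn _, hcle1 (j+1) hjm⟩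
        have hle : (k:ℝ)/n ≤ c (j+1) := by
          simp only [hc]
          rw [div_le_div_iff₀ hnr hmr]
          push_cast
          linarith
        have hgt : (j:ℝ)/m < (k:ℝ)/n := by
          rw [div_lt_div_iff₀ hmr hnr]
          linarith
        have hdist : |(k:ℝ)/n - c (j+1)| ≤ 1/(m:ℝ) := by
          rw [abs_of_nonpos (by linarith), neg_sub]
          have h1 := hcdiff j
          have : c j = (j:ℝ)/m := rfl
          linarith
        have := hclose ((k:ℝ)/n) hknIcc (c (j+1)) hcIcc hdist
        rw [abs_mul, abs_of_nonneg (ha k).le]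
        exact mul_le_mul_of_nonneg_right this (ha k).le
      refine (Finset.sum_le_sum step).trans ?_
      apply le_of_eq
      rw [hpart a, Finset.mul_sum]
      exact Finset.sum_congr rfl fun j _ => by rw [Finset.mul_sum]
    calc (1/(n:ℝ)^α) * |∑ j ∈ range m, ∑ k ∈ Ioc (j*n/m) ((j+1)*n/m),
          (f (k/n) - f (c (j+1))) * a k|
        ≤ (1/(n:ℝ)^α) * (ε' * ∑ k ∈ Finset.Icc 1 n, a k) :=
          mul_le_mul_of_nonneg_left hbound (by positivity)
      _ = ε' * ((1/(n:ℝ)^α) * ∑ k ∈ Finset.Icc 1 n, a k) := by ring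
  -- eventual bounds and conclusion
  have hSbound : ∀ᶠ n : ℕ in atTop, (1/(n:ℝ)^α) * (∑ k ∈ Finset.Icc 1 n, a k) ≤ |L| + 1 := by
    filter_upwards [hL.eventually (Metric.ball_mem_nhds L one_pos)] with n hn
    simp only [Metric.mem_ball, Real.dist_eq] at hn
    have := abs_sub_abs_le_abs_sub ((1/(n:ℝ)^α) * ∑ k ∈ Finset.Icc 1 n, a k) L
    have h2 := le_abs_self ((1/(n:ℝ)^α) * ∑ k ∈ Finset.Icc 1 n, a k)
    linarith
  have hBev : ∀ᶠ n : ℕ in atTop, |(∑ j ∈ range m, f (c (j+1)) *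
      ((1/(n:ℝ)^α) * (∑ k ∈ Finset.Icc 1 ((j+1)*n/m), a k)
        - (1/(n:ℝ)^α) * (∑ k ∈ Finset.Icc 1 (j*n/m), a k))) - L * Lg| < ε/4 := by
    filter_upwards [hBlim.eventually (Metric.ball_mem_nhds (L * Lg) (by positivity : (0:ℝ) < ε/4))]
      with n hn
    simp only [Metric.mem_ball, Real.dist_eq] at hn
    exact hn
  have hfin : ∀ᶠ n : ℕ in atTop, dist ((1/(n:ℝ)^α) * ∑ k ∈ Finset.Icc 1 n, f (k/n) * a k)
      (L * I) < ε := by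
    filter_upwards [hSbound, hBev, eventually_ge_atTop 1] with n h1 h2 h3
    rw [Real.dist_eq]
    have hab := hABn n h3
    have hSnn : (0:ℝ) ≤ (1/(n:ℝ)^α) * ∑ k ∈ Finset.Icc 1 n, a k := by
      have hnr : (0:ℝ) < n := by exact_mod_cast h3
      have : (0:ℝ) ≤ ∑ k ∈ Finset.Icc 1 n, a k :=
        Finset.sum_nonneg fun k _ => (ha k).le
      positivity
    have e1 : ε' * ((1/(n:ℝ)^α) * ∑ k ∈ Finset.Icc 1 n, a k) ≤ ε' * (|L| + 1) :=
      mul_le_mul_of_nonneg_left h1 hε'.le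
    have e2 : ε' * (|L| + 1) = ε/4 := by
      rw [hε'def]
      field_simp
    have e3 : |L * Lg - L * I| ≤ (|L| + 1) * ε' := by
      rw [← mul_sub, abs_mul]
      have : |L| * |Lg - I| ≤ |L| * ε' := mul_le_mul_of_nonneg_left hLgI (abs_nonneg L)
      nlinarith [abs_nonneg L, hε'.le]
    have e4 : (|L| + 1) * ε' = ε/4 := by rw [mul_comm]; exact e2
    set An := (1/(n:ℝ)^α) * ∑ k ∈ Finset.Icc 1 n, f (k/n) * a k
    set Bn := ∑ j ∈ range m, f (c (j+1)) *
      ((1/(n:ℝ)^α) * (∑ k ∈ Finset.Icc 1 ((j+1)*n/m), a k)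
        - (1/(n:ℝ)^α) * (∑ k ∈ Finset.Icc 1 (j*n/m), a k))
    calc |An - L * I| ≤ |An - Bn| + |Bn - L * Lg| + |L * Lg - L * I| := by
          have := abs_sub_le An Bn (L * Lg)
          have := abs_sub_le An (L * Lg) (L * I)
          have := abs_sub_le Bn (L * Lg) (L * I)
          linarith [abs_sub_le An Bn (L * I), abs_sub_le Bn (L * Lg) (L * I),
            abs_sub_le An Bn (L * Lg)]
      _ < ε := by
          have := hab.trans (e1.trans_eq e2)
          linarith [e3.trans_eq e4]
  exact eventually_atTop.1 hfin
end

section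
/- Let α > 0 and (a_n) a sequence of positive reals with (1/n^α) ∑_{k=1}^n a_k → L. Then for every nonnegative integer p, (1/n^(α+p)) ∑_{k=1}^n k^p a_k → αL/(α+p). -/
open Filter Finset Asymptotics Topology

lemma lemW_lower {α : ℝ} (hα : 0 < α) (n : ℕ) :
    ((n:ℝ))^(α+1)/(α+1) ≤ ∑ i ∈ Finset.range (n+1), (i:ℝ)^α := by
  have hmono : MonotoneOn (fun x : ℝ => x ^ α) (Set.Icc 0 (0 + (n:ℕ))) :=
    fun x hx y hy hxy => Real.rpow_le_rpow hx.1 hxy hα.le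
  have h2 := hmono.integral_le_sum
  have hint : ∫ x in (0:ℝ)..((0:ℝ) + (n:ℕ)), x ^ α = (n:ℝ)^(α+1)/(α+1) := by
    rw [integral_rpow (Or.inl (by linarith))]
    rw [Real.zero_rpow (by positivity : α+1 ≠ 0)]
    ring_nf
  rw [hint] at h2
  rw [Finset.sum_range_succ']
  simp only [Nat.cast_zero, Real.zero_rpow hα.ne', add_zero]
  simpa using h2

lemma lemW_upper {α : ℝ} (hα : 0 < α) (n : ℕ) :
    (∑ i ∈ Finset.range n, (i:ℝ)^α) ≤ (n:ℝ)^(α+1)/(α+1) := by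
  have hmono : MonotoneOn (fun x : ℝ => x ^ α) (Set.Icc 0 (0 + (n:ℕ))) :=
    fun x hx y hy hxy => Real.rpow_le_rpow hx.1 hxy hα.le
  have h2 := hmono.sum_le_integral
  have hint : ∫ x in (0:ℝ)..((0:ℝ) + (n:ℕ)), x ^ α = (n:ℝ)^(α+1)/(α+1) := by
    rw [integral_rpow (Or.inl (by linarith))]
    rw [Real.zero_rpow (by positivity : α+1 ≠ 0)]
    ring_nf
  rw [hint] at h2
  simpa using h2

lemma lemW_ratio : Tendsto (fun n : ℕ => ((n-1:ℕ):ℝ)/(n:ℝ)) atTop (𝓝 1) := by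
  have h : Tendsto (fun n : ℕ => 1 - 1/(n:ℝ)) atTop (𝓝 1) := by
    simpa using tendsto_const_nhds.sub (tendsto_one_div_atTop_nhds_zero_nat : Tendsto (fun n : ℕ => 1/(n:ℝ)) atTop (𝓝 0))
  apply h.congr'
  filter_upwards [eventually_ge_atTop 1] with n hn
  have hn0 : (n:ℝ) ≠ 0 := by positivity
  rw [Nat.cast_sub hn]
  field_simp
  simp

lemma lemW {α : ℝ} (hα : 0 < α) :
    Tendsto (fun n : ℕ => (∑ i ∈ Finset.range n, (i:ℝ)^α) / (n:ℝ)^(α+1)) atTop (𝓝 (1/(α+1))) := by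
  have hr : Tendsto (fun n : ℕ => (((n-1:ℕ):ℝ)/(n:ℝ))^(α+1) * (1/(α+1))) atTop
      (𝓝 (1/(α+1))) := by
    have c : ContinuousAt (fun x : ℝ => x^(α+1)) 1 :=
      Real.continuousAt_rpow_const 1 (α+1) (Or.inl one_ne_zero)
    have := (c.tendsto.comp lemW_ratio).mul_const (1/(α+1))
    simpa [Real.one_rpow] using this
  apply tendsto_of_tendsto_of_tendsto_of_le_of_le' hr tendsto_const_nhds
  · filter_upwards [eventually_ge_atTop 1] with n hn
    have hn0 : (0:ℝ) < (n:ℝ) := by exact_mod_cast Nat.pos_of_ne_zero (by omega)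
    have hnum := lemW_lower hα (n-1)
    rw [Nat.sub_add_cancel hn] at hnum
    have hd : (((n-1:ℕ):ℝ)/(n:ℝ))^(α+1) * (1/(α+1))
        = (((n-1:ℕ):ℝ)^(α+1)/(α+1)) / (n:ℝ)^(α+1) := by
      rw [Real.div_rpow (by positivity) hn0.le]; ring
    rw [hd]
    gcongr
  · filter_upwards [eventually_ge_atTop 1] with n hn
    have hn0 : (0:ℝ) < (n:ℝ) := by exact_mod_cast Nat.pos_of_ne_zero (by omega)
    have hp : (0:ℝ) < (n:ℝ)^(α+1) := by positivity
    calc (∑ i ∈ Finset.range n, (i:ℝ)^α) / (n:ℝ)^(α+1)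
        ≤ ((n:ℝ)^(α+1)/(α+1)) / (n:ℝ)^(α+1) := by gcongr; exact lemW_upper hα n
      _ = 1/(α+1) := by field_simp

lemma lemWtop {α : ℝ} (hα : 0 < α) :
    Tendsto (fun n : ℕ => ∑ i ∈ Finset.range n, (i:ℝ)^α) atTop atTop := by
  refine tendsto_atTop_mono' atTop (f₁ := fun n : ℕ => ((n-1:ℕ):ℝ)^(α+1)/(α+1)) ?_ ?_
  · filter_upwards [eventually_ge_atTop 1] with n hn
    have := lemW_lower hα (n-1)
    rwa [Nat.sub_add_cancel hn] at this
  · apply Tendsto.atTop_div_const (by linarith)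
    exact (tendsto_rpow_atTop (by linarith)).comp
      (tendsto_natCast_atTop_atTop.comp (tendsto_sub_atTop_nat 1))

lemma lemE {α L : ℝ} {S : ℕ → ℝ}
    (hS : Tendsto (fun n : ℕ => (1/(n:ℝ)^α) * S n) atTop (𝓝 L)) :
    (fun n : ℕ => S n - L * (n:ℝ)^α) =o[atTop] (fun n : ℕ => (n:ℝ)^α) := by
  have h0 : Tendsto (fun n : ℕ => (1/(n:ℝ)^α) * S n - L) atTop (𝓝 0) := by
    simpa using hS.sub_const L
  have h1 : (fun n : ℕ => (1/(n:ℝ)^α) * S n - L) =o[atTop] (fun _ : ℕ => (1:ℝ)) :=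
    (isLittleO_one_iff ℝ).2 h0
  have h2 := h1.mul_isBigO (isBigO_refl (fun n : ℕ => (n:ℝ)^α) atTop)
  refine h2.congr' ?_ ?_
  · filter_upwards [eventually_ge_atTop 1] with n hn
    have hn0 : ((n:ℝ))^α ≠ 0 := by
      have : (0:ℝ) < (n:ℝ) := by exact_mod_cast Nat.pos_of_ne_zero (by omega)
      positivity
    field_simp
  · filter_upwards with n
    simp

lemma lemCes {α L : ℝ} (hα : 0 < α) {S : ℕ → ℝ}
    (hS : Tendsto (fun n : ℕ => (1/(n:ℝ)^α) * S n) atTop (𝓝 L)) :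
    Tendsto (fun n : ℕ => (1/(n:ℝ)^(α+1)) * ∑ i ∈ Finset.range n, S i) atTop
      (𝓝 (L/(α+1))) := by
  set W : ℕ → ℝ := fun n => ∑ i ∈ Finset.range n, (i:ℝ)^α with hWdef
  set E : ℕ → ℝ := fun n => ∑ i ∈ Finset.range n, (S i - L * (i:ℝ)^α) with hEdef
  have hW : Tendsto (fun n : ℕ => W n / (n:ℝ)^(α+1)) atTop (𝓝 (1/(α+1))) := lemW hα
  have hWtop : Tendsto W atTop atTop := lemWtop hα
  have hE2 : E =o[atTop] W :=
    (lemE hS).sum_range (fun i => Real.rpow_nonneg (Nat.cast_nonneg i) α) hWtop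
  have hdiv : Tendsto (fun n => E n / W n) atTop (𝓝 0) := hE2.tendsto_div_nhds_zero
  have hcomb := (hdiv.mul hW).add (hW.const_mul L)
  rw [zero_mul, zero_add] at hcomb
  rw [show L * (1/(α+1)) = L/(α+1) by ring] at hcomb
  apply hcomb.congr'
  filter_upwards [hWtop.eventually_gt_atTop 0, eventually_ge_atTop 1] with n hWn hn
  have hn0 : ((n:ℝ))^(α+1) ≠ 0 := by
    have : (0:ℝ) < (n:ℝ) := by exact_mod_cast Nat.pos_of_ne_zero (by omega)
    positivity
  have hsplit : ∑ i ∈ Finset.range n, S i = E n + L * W n := by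
    rw [hEdef, hWdef]
    simp [Finset.sum_sub_distrib, Finset.mul_sum]
  rw [hsplit]
  field_simp

lemma lemAbel (a : ℕ → ℝ) (n : ℕ) :
    ∑ k ∈ Finset.Icc 1 n, (k:ℝ) * a k
      = n * (∑ j ∈ Finset.Icc 1 n, a j)
        - ∑ k ∈ Finset.range n, ∑ j ∈ Finset.Icc 1 k, a j := by
  induction n with
  | zero => simp
  | succ n ih =>
    rw [Finset.sum_Icc_succ_top (by omega : 1 ≤ n+1),
      Finset.sum_Icc_succ_top (by omega : 1 ≤ n+1), Finset.sum_range_succ, ih]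
    push_cast
    ring

lemma lemKey {α : ℝ} (hα : 0 < α) (a : ℕ → ℝ) {L : ℝ}
    (hL : Tendsto (fun n : ℕ => (1/(n:ℝ)^α) * ∑ k ∈ Finset.Icc 1 n, a k) atTop (𝓝 L)) :
    Tendsto (fun n : ℕ => (1/(n:ℝ)^(α+1)) * ∑ k ∈ Finset.Icc 1 n, (k:ℝ) * a k) atTop
      (𝓝 (α * L / (α+1))) := by
  set S : ℕ → ℝ := fun m => ∑ j ∈ Finset.Icc 1 m, a j with hSdef
  have hces : Tendsto (fun n : ℕ => (1/(n:ℝ)^(α+1)) * ∑ i ∈ Finset.range n, S i) atTop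
      (𝓝 (L/(α+1))) := lemCes hα hL
  have h1 : Tendsto (fun n : ℕ => (1/(n:ℝ)^(α+1)) * ((n:ℝ) * S n)) atTop (𝓝 L) := by
    apply hL.congr'
    filter_upwards [eventually_ge_atTop 1] with n hn
    have hn0 : (0:ℝ) < (n:ℝ) := by exact_mod_cast Nat.pos_of_ne_zero (by omega)
    rw [Real.rpow_add hn0, Real.rpow_one]
    have h1 : ((n:ℝ))^α ≠ 0 := by positivity
    field_simp
    ring
  have hcomb := h1.sub hces
  rw [show L - L/(α+1) = α * L / (α+1) by field_simp; ring] at hcomb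
  apply hcomb.congr
  intro n
  rw [lemAbel a n, mul_sub]

theorem stmt_3 (α : ℝ) (hα : 0 < α) (a : ℕ → ℝ) (ha : ∀ n, 0 < a n) (L : ℝ)
    (hL : Filter.Tendsto (fun n : ℕ => (1 / (n : ℝ) ^ α) * ∑ k ∈ Finset.Icc 1 n, a k)
      Filter.atTop (nhds L)) (p : ℕ) :
    Filter.Tendsto
      (fun n : ℕ => (1 / (n : ℝ) ^ (α + p)) * ∑ k ∈ Finset.Icc 1 n, (k : ℝ) ^ p * a k)
      Filter.atTop (nhds (α * L / (α + p))) := by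
  induction p with
  | zero =>
    simpa [mul_div_assoc, mul_div_cancel_left₀ L hα.ne'] using hL
  | succ p ih =>
    have hα' : 0 < α + (p:ℝ) := by positivity
    have hkey := lemKey hα' (fun k : ℕ => (k:ℝ)^p * a k) ih
    have hcanc : (α + (p:ℝ)) * (α * L / (α + (p:ℝ))) = α * L := by
      field_simp
    have hval : α * L / (α + ((p:ℕ)+1:ℕ)) = (α + (p:ℝ)) * (α * L / (α + (p:ℝ))) / ((α + (p:ℝ)) + 1) := by
      rw [hcanc]
      push_cast
      ring_nf
    rw [hval]
    apply hkey.congr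
    intro n
    have hexp : α + (((p:ℕ)+1:ℕ):ℝ) = (α + (p:ℝ)) + 1 := by push_cast; ring
    rw [hexp]
    congr 1
    apply Finset.sum_congr rfl
    intro k _
    rw [pow_succ]
    ring
end

section
/- The limit as n → ∞ of ∑_{k=1}^n (arctan(k/n)/(n+k)) · (φ(k)/k) equals (3 log 2)/(4π), where φ is the Euler totient function. -/
open Filter Real Finset intervalIntegral Set MeasureTheory ArithmeticFunction
open scoped ArithmeticFunction.Moebius

noncomputable def gg (x : ℝ) : ℝ := Real.arctan x / (1 + x)

lemma gg_contOn : ContinuousOn gg (Set.Ici (0:ℝ)) := by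
  apply ContinuousOn.div Real.continuous_arctan.continuousOn
    (continuous_const.add continuous_id).continuousOn
  intro x hx
  simp only [Pi.add_apply, _root_.id]
  have : (0:ℝ) ≤ x := hx
  nlinarith

lemma arctan_nn {x : ℝ} (hx : 0 ≤ x) : 0 ≤ Real.arctan x := by
  rw [← Real.arctan_zero]
  exact Real.arctan_strictMono.monotone hx

lemma gg_nonneg {x : ℝ} (hx : 0 ≤ x) : 0 ≤ gg x :=
  div_nonneg (arctan_nn hx) (by linarith)

lemma gg_le {x : ℝ} (hx : 0 ≤ x) : gg x ≤ π / 2 := by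
  have h1 : Real.arctan x ≤ π / 2 := (Real.arctan_lt_pi_div_two x).le
  have h2 : (1:ℝ) ≤ 1 + x := by linarith
  calc gg x ≤ Real.arctan x := div_le_self (arctan_nn hx) h2
    _ ≤ π / 2 := h1

lemma arctan_lip (x y : ℝ) : |Real.arctan y - Real.arctan x| ≤ |y - x| := by
  have hl : LipschitzWith 1 Real.arctan := by
    apply lipschitzWith_of_nnnorm_deriv_le Real.differentiable_arctan
    intro x
    rw [Real.deriv_arctan]
    rw [← NNReal.coe_le_coe]
    simp only [coe_nnnorm, Real.norm_eq_abs, NNReal.coe_one]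
    rw [abs_of_pos (by positivity)]
    rw [div_le_one (by positivity)]
    nlinarith [sq_nonneg x]
  have := hl.dist_le_mul y x
  simpa [Real.dist_eq] using this

lemma gg_lip {x y : ℝ} (hx : 0 ≤ x) (hy : 0 ≤ y) : |gg y - gg x| ≤ 3 * |y - x| := by
  have hax : 0 ≤ Real.arctan x := arctan_nn hx
  have haxu : Real.arctan x ≤ π / 2 := (Real.arctan_lt_pi_div_two x).le
  have h1x : (1:ℝ) ≤ 1 + x := by linarith
  have h1y : (1:ℝ) ≤ 1 + y := by linarith
  have hdecomp : gg y - gg x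
      = (Real.arctan y - Real.arctan x) / (1 + y)
        + Real.arctan x * ((1/(1+y)) - (1/(1+x))) := by
    rw [gg, gg]; field_simp; ring
  rw [hdecomp]
  have hπ : π / 2 ≤ 2 := by nlinarith [Real.pi_le_four]
  have t1 : |(Real.arctan y - Real.arctan x) / (1 + y)| ≤ |y - x| := by
    rw [abs_div, abs_of_pos (by linarith : (0:ℝ) < 1 + y)]
    calc |Real.arctan y - Real.arctan x| / (1 + y) ≤ |Real.arctan y - Real.arctan x| :=
          div_le_self (abs_nonneg _) h1y
      _ ≤ |y - x| := arctan_lip x y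
  have t2 : |Real.arctan x * ((1/(1+y)) - (1/(1+x)))| ≤ 2 * |y - x| := by
    rw [abs_mul]
    have he : (1/(1+y)) - (1/(1+x)) = (x - y) / ((1+x)*(1+y)) := by
      rw [div_sub_div _ _ (by linarith : (1:ℝ)+y ≠ 0) (by linarith : (1:ℝ)+x ≠ 0)]
      rw [mul_comm (1+y) (1+x)]
      congr 1
      ring
    rw [he, abs_div]
    have hd : (1:ℝ) ≤ |(1+x)*(1+y)| := by
      rw [abs_of_pos (by nlinarith)]; nlinarith
    have : |x - y| / |(1+x)*(1+y)| ≤ |x - y| := by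
      apply div_le_self (abs_nonneg _) hd
    calc |Real.arctan x| * (|x - y| / |(1+x)*(1+y)|) ≤ 2 * |x - y| := by
          rw [abs_of_nonneg hax]
          apply mul_le_mul (by linarith) this (by positivity) (by norm_num)
      _ = 2 * |y - x| := by rw [abs_sub_comm]
  calc |(Real.arctan y - Real.arctan x) / (1 + y)
        + Real.arctan x * ((1/(1+y)) - (1/(1+x)))|
      ≤ |(Real.arctan y - Real.arctan x) / (1 + y)|
        + |Real.arctan x * ((1/(1+y)) - (1/(1+x)))| := abs_add_le _ _
    _ ≤ |y - x| + 2 * |y - x| := add_le_add t1 t2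
    _ = 3 * |y - x| := by ring

lemma arctan_conj {t : ℝ} (ht : t ∈ Set.Icc (0:ℝ) 1) :
    Real.arctan ((1 - t) / (1 + t)) = π / 4 - Real.arctan t := by
  obtain ⟨h0, h1⟩ := ht
  have hden : (0:ℝ) < 1 + t := by linarith
  have hxy : ((1 - t) / (1 + t)) * t < 1 := by
    rw [div_mul_eq_mul_div, div_lt_one hden]
    nlinarith
  have := Real.arctan_add hxy
  have hsimp : ((1 - t) / (1 + t) + t) / (1 - (1 - t) / (1 + t) * t) = 1 := by
    rw [div_eq_one_iff_eq]
    · field_simp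
      ring
    · field_simp
      exact div_ne_zero (by nlinarith [sq_nonneg t]) hden.ne'
  rw [hsimp, Real.arctan_one] at this
  linarith

lemma integrable_one_div : IntervalIntegrable (fun t : ℝ => 1 / (1 + t)) MeasureTheory.volume 0 1 := by
  apply ContinuousOn.intervalIntegrable
  apply ContinuousOn.div continuousOn_const (continuous_const.add continuous_id).continuousOn
  intro x hx
  rw [Set.uIcc_of_le (by norm_num)] at hx
  have := hx.1
  simp only [Pi.add_apply, _root_.id]
  nlinarith

lemma integrable_gg : IntervalIntegrable gg MeasureTheory.volume 0 1 := by
  apply ContinuousOn.intervalIntegrable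
  rw [Set.uIcc_of_le (by norm_num)]
  exact gg_contOn.mono (fun x hx => hx.1)

lemma int_one_div : ∫ t in (0:ℝ)..1, 1 / (1 + t) = Real.log 2 := by
  have : ∀ t ∈ Set.uIcc (0:ℝ) 1, (1:ℝ) + t ≠ 0 := by
    intro t ht
    rw [Set.uIcc_of_le (by norm_num)] at ht
    nlinarith [ht.1]
  have h1 : (fun t : ℝ => 1 / (1+t)) = fun t => (fun x : ℝ => x⁻¹) (t + 1) := by
    funext t; rw [one_div, add_comm]
  rw [h1, intervalIntegral.integral_comp_add_right (fun x : ℝ => x⁻¹) 1]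
  norm_num [integral_inv_of_pos one_pos two_pos]

lemma gg_integral : ∫ x in (0:ℝ)..1, gg x = π * Real.log 2 / 8 := by
  set I := ∫ x in (0:ℝ)..1, gg x with hI
  -- substitution x = (1-t)/(1+t)
  have hsub : I = ∫ t in (0:ℝ)..1, (π/4 - Real.arctan t) / (1 + t) := by
    have hne : ∀ t ∈ Set.uIcc (0:ℝ) 1, (1:ℝ) + t ≠ 0 := by
      intro t ht
      rw [Set.uIcc_of_le (by norm_num)] at ht
      nlinarith [ht.1]
    have hderiv : ∀ t ∈ Set.uIcc (0:ℝ) 1,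
        HasDerivAt (fun t : ℝ => (1 - t)/(1 + t)) (-2/(1+t)^2) t := by
      intro t ht
      have h0 := hne t ht
      have hu : HasDerivAt (fun t : ℝ => 1 - t) (-1) t := by
        simpa using (hasDerivAt_id t).const_sub 1
      have hv : HasDerivAt (fun t : ℝ => 1 + t) 1 t := by
        simpa using (hasDerivAt_id t).const_add 1
      have := hu.div hv h0
      exact this.congr_deriv (by ring)
    have hcont : ContinuousOn (fun t : ℝ => -2/(1+t)^2) (Set.uIcc (0:ℝ) 1) := by
      apply ContinuousOn.div continuousOn_const (by fun_prop)
      intro t ht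
      exact pow_ne_zero 2 (hne t ht)
    have himg : (fun t : ℝ => (1 - t)/(1 + t)) '' (Set.uIcc (0:ℝ) 1) ⊆ Set.Icc (0:ℝ) 1 := by
      rintro x ⟨t, ht, rfl⟩
      rw [Set.uIcc_of_le (by norm_num)] at ht
      obtain ⟨h0, h1⟩ := ht
      have hd : (0:ℝ) < 1 + t := by linarith
      constructor
      · apply div_nonneg (by linarith) hd.le
      · rw [div_le_one hd]; linarith
    have hg : ContinuousOn gg ((fun t : ℝ => (1 - t)/(1 + t)) '' (Set.uIcc (0:ℝ) 1)) :=
      gg_contOn.mono (Set.Subset.trans himg (fun x hx => hx.1))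
    have hkey := intervalIntegral.integral_comp_smul_deriv' hderiv hcont hg
    have hInt : ∀ t ∈ Set.uIcc (0:ℝ) 1,
        (-2/(1+t)^2) • ((gg ∘ fun t : ℝ => (1 - t)/(1 + t)) t)
          = -((π/4 - Real.arctan t) / (1 + t)) := by
      intro t ht
      have h0 := hne t ht
      have harc : Real.arctan ((1 - t) / (1 + t)) = π / 4 - Real.arctan t := by
        apply arctan_conj
        rwa [Set.uIcc_of_le (by norm_num)] at ht
      simp only [Function.comp, gg, smul_eq_mul]
      rw [harc]
      have hpt : 1 + (1 - t) / (1 + t) = 2 / (1 + t) := by field_simp; ring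
      rw [hpt]
      field_simp
    rw [intervalIntegral.integral_congr hInt, intervalIntegral.integral_neg] at hkey
    simp only [show ((1:ℝ)-0)/(1+0) = 1 by norm_num, show ((1:ℝ)-1)/(1+1) = 0 by norm_num] at hkey
    rw [intervalIntegral.integral_symm 0 1, ← hI] at hkey
    linarith [hkey]
  have hsplit : (∫ t in (0:ℝ)..1, (π/4 - Real.arctan t) / (1 + t))
      = (π/4) * Real.log 2 - I := by
    have : ∀ t : ℝ, (π/4 - Real.arctan t) / (1 + t) = (π/4) * (1/(1+t)) - gg t := by
      intro t
      rw [gg]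
      ring
    rw [intervalIntegral.integral_congr (fun t _ => this t),
      intervalIntegral.integral_sub ((integrable_one_div).const_mul _) integrable_gg,
      intervalIntegral.integral_const_mul, int_one_div]
  rw [hsplit] at hsub
  linarith

lemma totient_div_eq (k : ℕ) (hk : k ≠ 0) :
    (Nat.totient k : ℝ) / k = ∑ d ∈ k.divisors, (μ d : ℝ) / d := by
  have hinv := (ArithmeticFunction.sum_eq_iff_sum_smul_moebius_eq (R := ℝ)
      (f := fun i => (Nat.totient i : ℝ)) (g := fun n => (n : ℝ))).mp ?_
  · have h1 := hinv k (Nat.pos_of_ne_zero hk)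
    rw [← h1, Finset.sum_div]
    rw [← Nat.sum_divisorsAntidiagonal (fun d e => (μ d : ℝ) / d) (n := k)]
    refine Finset.sum_congr rfl fun x hx => ?_
    obtain ⟨hxk, hk0⟩ := Nat.mem_divisorsAntidiagonal.mp hx
    have hx1 : x.1 ≠ 0 := by intro h0; rw [h0] at hxk; simp at hxk; exact hk hxk.symm
    have hx2 : x.2 ≠ 0 := by intro h0; rw [h0] at hxk; simp at hxk; exact hk hxk.symm
    rw [zsmul_eq_mul, ← hxk]
    push_cast
    field_simp
  · intro n hn
    exact_mod_cast congrArg (Nat.cast : ℕ → ℝ) (Nat.sum_totient n)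

lemma moebius_summable : Summable (fun d : ℕ => (μ d : ℝ) / d ^ 2) := by
  apply Summable.of_norm
  apply Summable.of_nonneg_of_le (fun d => norm_nonneg _) (fun d => ?_)
    (Real.summable_one_div_nat_pow.mpr one_lt_two)
  rw [Real.norm_eq_abs, abs_div, abs_pow, Nat.abs_cast, one_div]
  rcases eq_or_ne d 0 with rfl | hd
  · simp
  · rw [div_le_iff₀ (by positivity), inv_mul_cancel₀ (by positivity)]
    have := abs_moebius_le_one (n := d)
    calc |(μ d : ℝ)| = ((|μ d| : ℤ) : ℝ) := by push_cast; ring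
    _ ≤ 1 := by exact_mod_cast this

lemma moebius_tsum : ∑' d : ℕ, (μ d : ℝ) / d ^ 2 = 6 / π ^ 2 := by
  have hz : riemannZeta 2 = (π : ℂ) ^ 2 / 6 := riemannZeta_two
  have h2 : (1 : ℝ) < (2 : ℂ).re := by norm_num
  have hmul := ArithmeticFunction.LSeries_zeta_mul_Lseries_moebius (s := 2) h2
  rw [ArithmeticFunction.LSeries_zeta_eq_riemannZeta h2, hz] at hmul
  have hπ : (π : ℂ) ^ 2 ≠ 0 := by
    simp [Complex.ofReal_ne_zero, Real.pi_ne_zero]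
  have hL : LSeries (fun n => (μ n : ℂ)) 2 = 6 / (π : ℂ) ^ 2 := by
    field_simp at hmul ⊢
    linear_combination hmul
  have hterm : ∀ d : ℕ, LSeries.term (fun n => (μ n : ℂ)) 2 d = ((μ d : ℝ) / d ^ 2 : ℝ) := by
    intro d
    rcases eq_or_ne d 0 with rfl | hd
    · simp [LSeries.term]
    · rw [LSeries.term_of_ne_zero hd]
      push_cast
      rw [Complex.cpow_ofNat]
  have key : ((∑' d : ℕ, (μ d : ℝ) / d ^ 2 : ℝ) : ℂ) = 6 / (π : ℂ) ^ 2 := by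
    rw [← hL, LSeries, Complex.ofReal_tsum]
    exact tsum_congr fun d => (hterm d).symm
  have h6 : ((6 / π ^ 2 : ℝ) : ℂ) = 6 / (π : ℂ) ^ 2 := by push_cast; ring
  exact_mod_cast key.trans h6.symm

lemma riemann_est (d n : ℕ) (hd : 0 < d) (hn : 0 < n) :
    |((d:ℝ)/n) * (∑ m ∈ Finset.Icc 1 (n/d), gg ((d:ℝ)*m/n)) - ∫ x in (0:ℝ)..1, gg x|
      ≤ 5 * d / n := by
  have hn0 : (0:ℝ) < n := by exact_mod_cast hn
  have hd0 : (0:ℝ) < d := by exact_mod_cast hd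
  set δ : ℝ := (d:ℝ)/n with hδdef
  have hδ : 0 < δ := by positivity
  set M : ℕ := n / d with hMdef
  set a : ℕ → ℝ := fun m => (m:ℝ) * δ with hadef
  have ha0 : a 0 = 0 := by simp [hadef]
  have hstep : ∀ i : ℕ, a (i+1) - a i = δ := by
    intro i; simp only [hadef]; push_cast; ring
  have hmono : ∀ i : ℕ, a i ≤ a (i+1) := by
    intro i; nlinarith [hstep i, hδ]
  have hnn : ∀ i : ℕ, 0 ≤ a i := by
    intro i; simp only [hadef]; positivity
  have haM1 : a M ≤ 1 := by
    have : M * d ≤ n := Nat.div_mul_le_self n d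
    have : (M:ℝ) * d ≤ n := by exact_mod_cast this
    simp only [hadef, hδdef]
    rw [mul_div_assoc', div_le_one hn0]
    linarith
  have haMδ : 1 - a M ≤ δ := by
    have h1 : n < d * M + d := by
      show n < d * (n/d) + d
      have h2 := Nat.div_add_mod n d
      have hmod := Nat.mod_lt n hd
      omega
    have : (n:ℝ) < d * M + d := by exact_mod_cast h1
    simp only [hadef, hδdef]
    rw [sub_le_iff_le_add, mul_div_assoc', ← add_div, le_div_iff₀ hn0]
    nlinarith
  -- integrability on pieces
  have hint : ∀ i : ℕ, IntervalIntegrable gg volume (a i) (a (i+1)) := by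
    intro i
    apply ContinuousOn.intervalIntegrable
    apply gg_contOn.mono
    rw [Set.uIcc_of_le (hmono i)]
    exact fun x hx => le_trans (hnn i) hx.1
  have hadj := intervalIntegral.sum_integral_adjacent_intervals (a := a) (n := M) (fun i _ => hint i)
  -- rewrite sum
  have hsum : ∑ m ∈ Finset.Icc 1 M, gg ((d:ℝ)*m/n) = ∑ i ∈ Finset.range M, gg (a (i+1)) := by
    rw [← Finset.Ico_add_one_right_eq_Icc, Finset.sum_Ico_eq_sum_range]
    simp only [Nat.add_sub_cancel]
    refine Finset.sum_congr rfl fun i _ => ?_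
    congr 1
    simp only [hadef, hδdef]
    push_cast
    ring
  -- error on [0, a M]
  have hterm : ∀ i ∈ Finset.range M,
      |δ * gg (a (i+1)) - ∫ x in a i..a (i+1), gg x| ≤ 3 * δ^2 := by
    intro i _
    have heq : δ * gg (a (i+1)) - (∫ x in a i..a (i+1), gg x)
        = ∫ x in a i..a (i+1), (gg (a (i+1)) - gg x) := by
      rw [intervalIntegral.integral_sub intervalIntegrable_const (hint i),
        intervalIntegral.integral_const, hstep i, smul_eq_mul]
    rw [heq]
    have hb := intervalIntegral.norm_integral_le_of_norm_le_const
      (C := 3 * δ) (f := fun x => gg (a (i+1)) - gg x) (a := a i) (b := a (i+1)) ?_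
    · rw [Real.norm_eq_abs] at hb
      calc |∫ x in a i..a (i+1), (gg (a (i+1)) - gg x)| ≤ 3 * δ * |a (i+1) - a i| := hb
        _ = 3 * δ^2 := by rw [hstep i, abs_of_pos hδ]; ring
    · intro x hx
      rw [Set.uIoc_of_le (hmono i)] at hx
      have hx0 : 0 ≤ x := le_trans (hnn i) hx.1.le
      rw [Real.norm_eq_abs]
      calc |gg (a (i+1)) - gg x| ≤ 3 * |a (i+1) - x| := gg_lip hx0 (hnn (i+1))
        _ ≤ 3 * δ := by
            have h1 : a (i+1) - x ≤ δ := by nlinarith [hstep i, hx.1]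
            have h2 : 0 ≤ a (i+1) - x := by linarith [hx.2]
            rw [abs_of_nonneg h2]; linarith
  have herr1 : |δ * (∑ m ∈ Finset.Icc 1 M, gg ((d:ℝ)*m/n)) - ∫ x in (0:ℝ)..a M, gg x|
      ≤ 3 * δ := by
    rw [hsum, ← ha0, ← hadj, Finset.mul_sum, ← Finset.sum_sub_distrib]
    calc |∑ i ∈ Finset.range M, (δ * gg (a (i+1)) - ∫ x in a i..a (i+1), gg x)|
        ≤ ∑ i ∈ Finset.range M, |δ * gg (a (i+1)) - ∫ x in a i..a (i+1), gg x| :=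
          Finset.abs_sum_le_sum_abs _ _
      _ ≤ ∑ i ∈ Finset.range M, 3 * δ^2 := Finset.sum_le_sum hterm
      _ = M * (3 * δ^2) := by rw [Finset.sum_const, Finset.card_range]; ring
      _ ≤ 3 * δ := by
          have hMδ : (M:ℝ) * δ ≤ 1 := by
            have := haM1; simp only [hadef] at this; exact this
          nlinarith [hδ, Nat.cast_nonneg (α := ℝ) M]
  -- tail
  have hint2 : IntervalIntegrable gg volume (a M) 1 := by
    apply ContinuousOn.intervalIntegrable
    apply gg_contOn.mono
    rw [Set.uIcc_of_le haM1]
    exact fun x hx => le_trans (hnn M) hx.1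
  have hint1 : IntervalIntegrable gg volume 0 (a M) := by
    apply ContinuousOn.intervalIntegrable
    apply gg_contOn.mono
    rw [Set.uIcc_of_le (hnn M)]
    exact fun x hx => hx.1
  have hsplit : (∫ x in (0:ℝ)..1, gg x)
      = (∫ x in (0:ℝ)..a M, gg x) + ∫ x in a M..1, gg x :=
    (intervalIntegral.integral_add_adjacent_intervals hint1 hint2).symm
  have herr2 : |∫ x in a M..1, gg x| ≤ 2 * δ := by
    have hb := intervalIntegral.norm_integral_le_of_norm_le_const
      (C := π/2) (f := gg) (a := a M) (b := 1) ?_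
    · rw [Real.norm_eq_abs] at hb
      have hπ : π/2 ≤ 2 := by nlinarith [Real.pi_le_four]
      calc |∫ x in a M..1, gg x| ≤ π/2 * |1 - a M| := hb
        _ ≤ 2 * δ := by
            rw [abs_of_nonneg (by linarith [haM1])]
            nlinarith [haMδ, haM1, Real.pi_pos]
    · intro x hx
      rw [Set.uIoc_of_le haM1] at hx
      have hx0 : 0 ≤ x := le_trans (hnn M) hx.1.le
      rw [Real.norm_eq_abs, abs_of_nonneg (gg_nonneg hx0)]
      exact gg_le hx0
  calc |δ * (∑ m ∈ Finset.Icc 1 M, gg ((d:ℝ)*m/n)) - ∫ x in (0:ℝ)..1, gg x|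
      = |(δ * (∑ m ∈ Finset.Icc 1 M, gg ((d:ℝ)*m/n)) - ∫ x in (0:ℝ)..a M, gg x)
          - (∫ x in a M..1, gg x)| := by rw [hsplit]; congr 1; ring
    _ ≤ |δ * (∑ m ∈ Finset.Icc 1 M, gg ((d:ℝ)*m/n)) - ∫ x in (0:ℝ)..a M, gg x|
          + |∫ x in a M..1, gg x| := abs_sub _ _
    _ ≤ 3 * δ + 2 * δ := add_le_add herr1 herr2
    _ = 5 * d / n := by rw [hδdef]; ring

lemma riemann_tendsto (d : ℕ) (hd : 0 < d) :
    Filter.Tendsto (fun n : ℕ => (1/(n:ℝ)) * ∑ m ∈ Finset.Icc 1 (n/d), gg ((d:ℝ)*m/n))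
      Filter.atTop (nhds ((∫ x in (0:ℝ)..1, gg x)/d)) := by
  set I := ∫ x in (0:ℝ)..1, gg x with hI
  set T : ℕ → ℝ := fun n => (1/(n:ℝ)) * ∑ m ∈ Finset.Icc 1 (n/d), gg ((d:ℝ)*m/n) with hT
  have hd0 : (0:ℝ) < d := by exact_mod_cast hd
  have key : ∀ n : ℕ, 1 ≤ n → ‖T n - I/d‖ ≤ 5/n := by
    intro n hn
    have hn0 : (0:ℝ) < n := by exact_mod_cast hn
    have hest := riemann_est d n hd hn
    have hTe : T n - I/d = (1/d) * (((d:ℝ)/n) * (∑ m ∈ Finset.Icc 1 (n/d), gg ((d:ℝ)*m/n)) - I) := by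
      simp only [hT]
      field_simp
    rw [Real.norm_eq_abs, hTe, abs_mul, abs_of_pos (by positivity : (0:ℝ) < 1/d)]
    calc 1/(d:ℝ) * |((d:ℝ)/n) * (∑ m ∈ Finset.Icc 1 (n/d), gg ((d:ℝ)*m/n)) - I|
        ≤ 1/(d:ℝ) * (5 * d / n) := by
          apply mul_le_mul_of_nonneg_left hest (by positivity)
      _ = 5/n := by field_simp
  have hz : Filter.Tendsto (fun n : ℕ => (5:ℝ)/n) Filter.atTop (nhds 0) :=
    tendsto_const_div_atTop_nhds_zero_nat 5
  have hsub : Filter.Tendsto (fun n => T n - I/d) Filter.atTop (nhds 0) := by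
    apply squeeze_zero_norm' ?_ hz
    filter_upwards [Filter.eventually_ge_atTop 1] with n hn
    exact key n hn
  have := hsub.add (tendsto_const_nhds (x := I/d) (f := Filter.atTop (α := ℕ)))
  simpa using this

lemma swap_sum (n : ℕ) (F : ℕ → ℕ → ℝ) :
    ∑ k ∈ Finset.Icc 1 n, ∑ d ∈ k.divisors, F k d
      = ∑ d ∈ Finset.Icc 1 n, ∑ m ∈ Finset.Icc 1 (n/d), F (d*m) d := by
  rw [Finset.sum_sigma', Finset.sum_sigma']
  refine Finset.sum_nbij' (i := fun x => ⟨x.2, x.1 / x.2⟩) (j := fun x => ⟨x.1 * x.2, x.1⟩)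
    ?_ ?_ ?_ ?_ ?_
  · rintro ⟨k, d⟩ hx
    simp only [Finset.mem_sigma, Finset.mem_Icc, Nat.mem_divisors] at hx ⊢
    obtain ⟨⟨hk1, hkn⟩, hdk, hk0⟩ := hx
    have hd0 : 0 < d := Nat.pos_of_dvd_of_pos hdk (Nat.pos_of_ne_zero hk0)
    refine ⟨⟨hd0, le_trans (Nat.le_of_dvd (Nat.pos_of_ne_zero hk0) hdk) hkn⟩,
      Nat.one_le_div_iff hd0 |>.mpr (Nat.le_of_dvd (Nat.pos_of_ne_zero hk0) hdk),
      Nat.div_le_div_right hkn⟩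
  · rintro ⟨d, m⟩ hx
    simp only [Finset.mem_sigma, Finset.mem_Icc, Nat.mem_divisors] at hx ⊢
    obtain ⟨⟨hd1, hdn⟩, hm1, hmnd⟩ := hx
    have hdm : d * m ≤ n := by
      calc d * m ≤ d * (n/d) := Nat.mul_le_mul_left d hmnd
        _ ≤ n := Nat.mul_div_le n d
    exact ⟨⟨Nat.one_le_iff_ne_zero.mpr (by positivity), hdm⟩, ⟨m, rfl⟩,
      by positivity⟩
  · rintro ⟨k, d⟩ hx
    simp only [Finset.mem_sigma, Finset.mem_Icc, Nat.mem_divisors] at hx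
    obtain ⟨_, hdk, hk0⟩ := hx
    simp only [Sigma.mk.inj_iff, heq_eq_eq]
    exact ⟨Nat.mul_div_cancel' hdk, trivial⟩
  · rintro ⟨d, m⟩ hx
    simp only [Finset.mem_sigma, Finset.mem_Icc] at hx
    obtain ⟨⟨hd1, _⟩, _, _⟩ := hx
    simp only [Sigma.mk.inj_iff, heq_eq_eq]
    exact ⟨trivial, Nat.mul_div_cancel_left m hd1⟩
  · rintro ⟨k, d⟩ hx
    simp only [Finset.mem_sigma, Finset.mem_Icc, Nat.mem_divisors] at hx
    obtain ⟨_, hdk, hk0⟩ := hx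
    simp only
    rw [Nat.mul_div_cancel' hdk]

theorem stmt_4 :
    Filter.Tendsto
      (fun n : ℕ => ∑ k ∈ Finset.Icc 1 n,
        Real.arctan ((k : ℝ) / n) / ((n : ℝ) + k) * (Nat.totient k / (k : ℝ)))
      Filter.atTop (nhds (3 * Real.log 2 / (4 * Real.pi))) := by
  set I : ℝ := ∫ x in (0:ℝ)..1, gg x with hIdef
  set F : ℕ → ℕ → ℝ := fun n d =>
    ((μ d : ℝ)/d) * ((1/(n:ℝ)) * ∑ m ∈ Finset.Icc 1 (n/d), gg ((d:ℝ)*m/n)) with hFdef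
  set G : ℕ → ℝ := fun d => ((μ d : ℝ)/d) * (I/d) with hGdef
  have hFzero : ∀ n : ℕ, ∀ d ∉ Finset.Icc 1 n, F n d = 0 := by
    intro n d hd
    rw [Finset.mem_Icc, not_and_or] at hd
    rcases hd with hd | hd
    · have : d = 0 := by omega
      subst this
      simp [hFdef]
    · push_neg at hd
      have : n / d = 0 := Nat.div_eq_of_lt hd
      simp [hFdef, this]
  -- eventual equality
  have heq : (fun n : ℕ => ∑' d : ℕ, F n d) =ᶠ[Filter.atTop]
      (fun n : ℕ => ∑ k ∈ Finset.Icc 1 n,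
        Real.arctan ((k : ℝ) / n) / ((n : ℝ) + k) * (Nat.totient k / (k : ℝ))) := by
    filter_upwards [Filter.eventually_ge_atTop 1] with n hn
    have hn0 : (0:ℝ) < n := by exact_mod_cast hn
    rw [tsum_eq_sum (hFzero n)]
    have step1 : ∀ k ∈ Finset.Icc 1 n,
        Real.arctan ((k : ℝ) / n) / ((n : ℝ) + k) * (Nat.totient k / (k : ℝ))
          = ∑ d ∈ k.divisors, Real.arctan ((k : ℝ) / n) / ((n : ℝ) + k) * ((μ d : ℝ) / d) := by
      intro k hk
      rw [Finset.mem_Icc] at hk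
      rw [totient_div_eq k (by omega), Finset.mul_sum]
    rw [Finset.sum_congr rfl step1, swap_sum n
      (fun k d => Real.arctan ((k : ℝ) / n) / ((n : ℝ) + k) * ((μ d : ℝ) / d))]
    refine Finset.sum_congr rfl fun d hd => ?_
    rw [Finset.mem_Icc] at hd
    rw [hFdef]
    simp only
    rw [Finset.mul_sum, Finset.mul_sum]
    refine Finset.sum_congr rfl fun m hm => ?_
    rw [Finset.mem_Icc] at hm
    have hc : (0:ℝ) ≤ (d:ℝ)*m := by positivity
    have hx : ((d*m : ℕ) : ℝ) = (d:ℝ)*m := by push_cast; ring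
    rw [hx, gg]
    have h1 : (0:ℝ) < 1 + (d:ℝ)*m/n := by positivity
    field_simp
  -- dominated convergence
  have hbound : ∀ᶠ n in Filter.atTop, ∀ d : ℕ, ‖F n d‖ ≤ π/2 * (1/(d:ℝ)^2) := by
    filter_upwards [Filter.eventually_ge_atTop 1] with n hn
    intro d
    have hn0 : (0:ℝ) < n := by exact_mod_cast hn
    rcases Nat.eq_zero_or_pos d with rfl | hd
    · simp [hFdef]
    have hd0 : (0:ℝ) < d := by exact_mod_cast hd
    have hμ : |(μ d : ℝ)| ≤ 1 := by
      have := abs_moebius_le_one (n := d)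
      calc |(μ d : ℝ)| = ((|μ d| : ℤ) : ℝ) := by push_cast; ring
      _ ≤ 1 := by exact_mod_cast this
    set M := n / d with hM
    have hMn : (M:ℝ) * d ≤ n := by exact_mod_cast Nat.div_mul_le_self n d
    have hsum_nonneg : 0 ≤ ∑ m ∈ Finset.Icc 1 M, gg ((d:ℝ)*m/n) :=
      Finset.sum_nonneg fun m _ => gg_nonneg (by positivity)
    have hsum_le : ∑ m ∈ Finset.Icc 1 M, gg ((d:ℝ)*m/n) ≤ M * (π/2) := by
      calc ∑ m ∈ Finset.Icc 1 M, gg ((d:ℝ)*m/n) ≤ ∑ m ∈ Finset.Icc 1 M, π/2 :=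
            Finset.sum_le_sum fun m _ => gg_le (by positivity)
        _ = (Finset.Icc 1 M).card * (π/2) := by rw [Finset.sum_const, nsmul_eq_mul]
        _ = M * (π/2) := by rw [Nat.card_Icc]; norm_num
    have habs2 : |(1/(n:ℝ)) * ∑ m ∈ Finset.Icc 1 M, gg ((d:ℝ)*m/n)|
        ≤ (1/d) * (π/2) := by
      rw [abs_mul, abs_of_pos (by positivity : (0:ℝ) < 1/n), abs_of_nonneg hsum_nonneg]
      calc (1/(n:ℝ)) * ∑ m ∈ Finset.Icc 1 M, gg ((d:ℝ)*m/n)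
          ≤ (1/(n:ℝ)) * (M * (π/2)) := by
            apply mul_le_mul_of_nonneg_left hsum_le (by positivity)
        _ ≤ (1/d) * (π/2) := by
            rw [div_mul_eq_mul_div, one_mul, div_mul_eq_mul_div, one_mul,
              div_le_div_iff₀ hn0 hd0]
            nlinarith [Real.pi_pos]
    have habs1 : |(μ d : ℝ)/d| ≤ 1/d := by
      rw [abs_div, Nat.abs_cast]
      gcongr
    show |((μ d : ℝ)/d) * ((1/(n:ℝ)) * ∑ m ∈ Finset.Icc 1 M, gg ((d:ℝ)*m/n))| ≤ _
    rw [abs_mul]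
    calc |(μ d : ℝ)/d| * |(1/(n:ℝ)) * ∑ m ∈ Finset.Icc 1 M, gg ((d:ℝ)*m/n)|
        ≤ (1/d) * ((1/d) * (π/2)) := by
          apply mul_le_mul habs1 habs2 (abs_nonneg _) (by positivity)
      _ = π/2 * (1/(d:ℝ)^2) := by
          rw [div_mul_eq_mul_div, one_mul, div_mul_eq_mul_div, one_mul, mul_one_div]
          rw [div_div, div_eq_div_iff (by positivity) (by positivity)]
          ring
  have hpoint : ∀ d : ℕ, Filter.Tendsto (fun n => F n d) Filter.atTop (nhds (G d)) := by
    intro d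
    rcases Nat.eq_zero_or_pos d with rfl | hd
    · have h1 : (fun n => F n 0) = fun _ => (0:ℝ) := by
        funext n; simp [hFdef]
      have h2 : G 0 = 0 := by simp [hGdef]
      rw [h1, h2]
      exact tendsto_const_nhds
    · have := (riemann_tendsto d hd).const_mul ((μ d : ℝ)/d)
      simpa [hFdef, hGdef, hIdef] using this
  have hbnd_summable : Summable (fun d : ℕ => π/2 * (1/(d:ℝ)^2)) :=
    (Real.summable_one_div_nat_pow.mpr one_lt_two).mul_left _
  have htend := tendsto_tsum_of_dominated_convergence hbnd_summable hpoint hbound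
  -- value of the limit
  have hGsum : ∑' d : ℕ, G d = 3 * Real.log 2 / (4 * π) := by
    have h1 : ∀ d : ℕ, G d = ((μ d : ℝ)/d^2) * I := by
      intro d
      rw [hGdef]
      simp only
      rcases Nat.eq_zero_or_pos d with rfl | hd
      · simp
      · have hd' : (d:ℝ) ≠ 0 := by positivity
        rw [div_mul_div_comm, div_mul_eq_mul_div, sq]
    rw [tsum_congr h1, tsum_mul_right, moebius_tsum, hIdef, gg_integral]
    have hπ := Real.pi_pos
    field_simp
    ring
  rw [hGsum] at htend
  exact htend.congr' heq
end

section
/- For every continuous function f on [0,1], (1/n²) ∑_{k=1}^n f(k/n) φ(k) converges to (6/π²) ∫_0^1 x f(x) dx. -/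
open Filter Finset ArithmeticFunction Set intervalIntegral

open Filter Finset intervalIntegral Set

lemma riemann_sum_tendsto (g : ℝ → ℝ) (hg : ContinuousOn g (Set.Icc 0 1)) (d : ℕ) (hd : 1 ≤ d) :
    Tendsto (fun n : ℕ => ((d:ℝ)/n) * ∑ j ∈ Finset.Icc 1 (n/d), g ((j:ℝ)*d/n)) atTop
      (nhds (∫ x in (0:ℝ)..1, g x)) := by
  obtain ⟨C, hC⟩ := isCompact_Icc.exists_bound_of_continuousOn hg
  have hC0 : 0 ≤ C := le_trans (norm_nonneg _) (hC 0 (by constructor <;> norm_num))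
  have hu := (isCompact_Icc.uniformContinuousOn_of_continuous hg)
  rw [Metric.tendsto_atTop]
  intro ε hε
  obtain ⟨δ, hδ, hδ'⟩ := Metric.uniformContinuousOn_iff.mp hu (ε/4) (by positivity)
  obtain ⟨N, hN⟩ := exists_nat_gt (max ((d:ℝ)/δ) ((C+1)*d*(4/ε)))
  refine ⟨max N d + 1, fun n hn => ?_⟩
  have hnN : (N:ℝ) < n := by
    have : N < n := lt_of_lt_of_le (Nat.lt_succ_of_le (le_max_left _ _)) hn
    exact_mod_cast this
  have hnd : d ≤ n := le_trans (Nat.le_succ_of_le (le_max_right _ _)) hn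
  have hn0 : (0:ℝ) < n := lt_of_le_of_lt (le_max_of_le_left (by positivity)) hN |>.trans hnN
  set M := n / d with hM
  set h : ℝ := (d:ℝ)/n with hh
  have hh0 : 0 < h := div_pos (by exact_mod_cast hd) hn0
  have hhδ : h < δ := by
    rw [hh, div_lt_iff₀ hn0]
    have h1 : (d:ℝ)/δ < n := lt_of_le_of_lt (le_trans (le_max_left _ _) hN.le) hnN
    rw [div_lt_iff₀ hδ] at h1
    linarith
  have hChe : (C+1) * h < ε/4 := by
    have he : (C+1)*h = ((C+1)*d)/n := by rw [hh]; ring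
    rw [he, div_lt_iff₀ hn0]
    have h1 : (C+1)*d*(4/ε) < n := lt_of_le_of_lt (le_trans (le_max_right _ _) hN.le) hnN
    have h2 : (ε/4) * ((C+1)*(d:ℝ)*(4/ε)) = (C+1)*d := by field_simp
    have h3 := mul_lt_mul_of_pos_left h1 (show (0:ℝ) < ε/4 by positivity)
    rw [h2] at h3
    linarith
  set a : ℕ → ℝ := fun j => j * h with ha
  have haM : (M:ℝ) * h ≤ 1 := by
    rw [hh, mul_div_assoc']
    rw [div_le_one hn0]
    have : M * d ≤ n := Nat.div_mul_le_self n d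
    exact_mod_cast this
  have h1aM : 1 - (M:ℝ)*h ≤ h := by
    have : n < M * d + d := by
      have h3 := Nat.mod_lt n (show 0 < d from hd)
      calc n = d * M + n % d := by rw [hM]; exact (Nat.div_add_mod n d).symm
      _ < d * M + d := Nat.add_lt_add_left h3 _
      _ = M * d + d := by ring
    have hr : (n:ℝ) < M*d + d := by exact_mod_cast this
    rw [hh, mul_div_assoc']
    rw [sub_le_iff_le_add, ← add_div, le_div_iff₀ hn0, one_mul]
    push_cast
    linarith
  have hmono : Monotone a := fun i j hij => by
    simp only [ha]
    exact mul_le_mul_of_nonneg_right (by exact_mod_cast hij) hh0.le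
  have hsub : ∀ i j : ℕ, i ≤ j → j ≤ M → Set.uIcc (a i) (a j) ⊆ Set.Icc 0 1 := by
    intro i j hij hj
    apply Set.uIcc_subset_Icc
    · exact ⟨by positivity, le_trans (hmono (le_trans hij hj)) (by simpa [ha] using haM)⟩
    · exact ⟨by positivity, le_trans (hmono hj) (by simpa [ha] using haM)⟩
  have hint : ∀ i j : ℕ, i ≤ j → j ≤ M → IntervalIntegrable g MeasureTheory.volume (a i) (a j) :=
    fun i j hij hj => (hg.mono (hsub i j hij hj)).intervalIntegrable
  -- decompose the integral
  have hsplit : (∫ x in (0:ℝ)..1, g x)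
      = (∑ i ∈ Finset.range M, ∫ x in (a i)..(a (i+1)), g x) + ∫ x in (a M)..1, g x := by
    rw [intervalIntegral.sum_integral_adjacent_intervals
      (fun i hi => hint i (i+1) (Nat.le_succ i) hi)]
    have h0 : a 0 = 0 := by simp [ha]
    rw [h0]
    rw [intervalIntegral.integral_add_adjacent_intervals
      (by rw [← h0]; exact hint 0 M (Nat.zero_le M) le_rfl)
      ((hg.mono (Set.uIcc_subset_Icc ⟨by positivity, by simpa [ha] using haM⟩
        (by constructor <;> norm_num))).intervalIntegrable)]
  -- rewrite the sum
  have hsum : ((d:ℝ)/n) * ∑ j ∈ Finset.Icc 1 M, g ((j:ℝ)*d/n)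
      = ∑ i ∈ Finset.range M, h * g (a (i+1)) := by
    rw [Finset.mul_sum]
    rw [show Finset.Icc 1 M = Finset.Ico 1 (M+1) by rfl, Finset.sum_Ico_eq_sum_range]
    simp only [Nat.add_sub_cancel]
    apply Finset.sum_congr rfl
    intro i _
    have : ((1+i : ℕ):ℝ) * d / n = a (i+1) := by
      simp only [ha, hh]; push_cast; ring
    rw [this, hh]
  have haMh : ∀ i : ℕ, a (i+1) - a i = h := by
    intro i; simp only [ha]; push_cast; ring
  have key : ∀ i ∈ Finset.range M,
      |h * g (a (i+1)) - ∫ x in (a i)..(a (i+1)), g x| ≤ ε/4 * h := by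
    intro i hi
    rw [Finset.mem_range] at hi
    have hiM : i + 1 ≤ M := hi
    have hconst : h * g (a (i+1)) = ∫ _x in (a i)..(a (i+1)), g (a (i+1)) := by
      rw [intervalIntegral.integral_const, haMh i, smul_eq_mul]
    rw [hconst, ← intervalIntegral.integral_sub intervalIntegrable_const
      (hint i (i+1) (Nat.le_succ i) hiM)]
    have hb := intervalIntegral.norm_integral_le_of_norm_le_const
      (C := ε/4) (a := a i) (b := a (i+1)) (f := fun x => g (a (i+1)) - g x) ?_
    · rw [Real.norm_eq_abs] at hb
      have : |a (i+1) - a i| = h := by rw [haMh i]; exact abs_of_pos hh0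
      rw [this] at hb
      exact hb
    · intro x hx
      have hle : a i ≤ a (i+1) := hmono (Nat.le_succ i)
      rw [Set.uIoc_of_le hle] at hx
      have hx1 : x ∈ Set.Icc (0:ℝ) 1 := by
        constructor
        · exact le_trans (by positivity) hx.1.le
        · exact le_trans hx.2 (le_trans (hmono hiM) (by simpa [ha] using haM))
      have hx2 : a (i+1) ∈ Set.Icc (0:ℝ) 1 := by
        constructor
        · positivity
        · exact le_trans (hmono hiM) (by simpa [ha] using haM)
      have hd2 : dist (a (i+1)) x < δ := by
        rw [Real.dist_eq, abs_of_nonneg (by linarith [hx.2] : 0 ≤ a (i+1) - x)]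
        have := haMh i
        linarith [hx.1, hhδ]
      have := hδ' _ hx2 _ hx1 hd2
      rw [Real.dist_eq] at this
      exact le_of_lt this
  have htail : |∫ x in (a M)..1, g x| ≤ C * (1 - (M:ℝ)*h) := by
    have hb := intervalIntegral.norm_integral_le_of_norm_le_const
      (C := C) (a := a M) (b := 1) (f := g) ?_
    · rw [Real.norm_eq_abs] at hb
      have : |1 - a M| = 1 - (M:ℝ)*h := by
        rw [abs_of_nonneg (by simp only [ha]; linarith [haM])]
      rw [this] at hb
      exact hb
    · intro x hx
      have hle : a M ≤ 1 := by simpa [ha] using haM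
      rw [Set.uIoc_of_le hle] at hx
      exact hC x ⟨le_trans (by positivity) hx.1.le, hx.2⟩
  rw [Real.dist_eq, hsum, hsplit]
  have e1 : |(∑ i ∈ Finset.range M, h * g (a (i+1)))
      - ((∑ i ∈ Finset.range M, ∫ x in (a i)..(a (i+1)), g x) + ∫ x in (a M)..1, g x)|
      ≤ (∑ i ∈ Finset.range M, |h * g (a (i+1)) - ∫ x in (a i)..(a (i+1)), g x|)
        + |∫ x in (a M)..1, g x| := by
    have e2 : (∑ i ∈ Finset.range M, h * g (a (i+1)))
        - ((∑ i ∈ Finset.range M, ∫ x in (a i)..(a (i+1)), g x) + ∫ x in (a M)..1, g x)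
        = (∑ i ∈ Finset.range M, (h * g (a (i+1)) - ∫ x in (a i)..(a (i+1)), g x))
          - ∫ x in (a M)..1, g x := by
      rw [Finset.sum_sub_distrib]; ring
    rw [e2]
    exact le_trans (abs_sub _ _) (add_le_add (Finset.abs_sum_le_sum_abs _ _) le_rfl)
  have e3 : (∑ i ∈ Finset.range M, |h * g (a (i+1)) - ∫ x in (a i)..(a (i+1)), g x|)
      ≤ ε/4 := by
    calc (∑ i ∈ Finset.range M, |h * g (a (i+1)) - ∫ x in (a i)..(a (i+1)), g x|)
        ≤ ∑ _i ∈ Finset.range M, ε/4 * h := Finset.sum_le_sum key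
      _ = (M:ℝ) * (ε/4 * h) := by rw [Finset.sum_const, Finset.card_range]; simp
      _ = ε/4 * ((M:ℝ)*h) := by ring
      _ ≤ ε/4 * 1 := by apply mul_le_mul_of_nonneg_left haM (by positivity)
      _ = ε/4 := mul_one _
  have e4 : C * (1 - (M:ℝ)*h) < ε/4 := by
    have : C * (1 - (M:ℝ)*h) ≤ (C+1) * h := by
      calc C * (1 - (M:ℝ)*h) ≤ C * h := mul_le_mul_of_nonneg_left h1aM hC0
      _ ≤ (C+1) * h := by apply mul_le_mul_of_nonneg_right (by linarith) hh0.le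
    linarith
  calc |(∑ i ∈ Finset.range M, h * g (a (i+1)))
      - ((∑ i ∈ Finset.range M, ∫ x in (a i)..(a (i+1)), g x) + ∫ x in (a M)..1, g x)|
      ≤ (∑ i ∈ Finset.range M, |h * g (a (i+1)) - ∫ x in (a i)..(a (i+1)), g x|)
        + |∫ x in (a M)..1, g x| := e1
    _ ≤ ε/4 + C * (1 - (M:ℝ)*h) := add_le_add e3 htail
    _ < ε/4 + ε/4 := by linarith
    _ < ε := by linarith

open Filter Finset ArithmeticFunction

lemma key_identity (f : ℝ → ℝ) (n : ℕ) :
    (1 / (n:ℝ)^2) * ∑ k ∈ Finset.Icc 1 n, f ((k:ℝ)/n) * (Nat.totient k : ℝ)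
    = ∑ d ∈ Finset.Icc 1 n, ((moebius d : ℤ) : ℝ)
        * ((1/(n:ℝ)^2) * ∑ j ∈ Finset.Icc 1 (n/d), (j:ℝ) * f ((d:ℝ)*j/n)) := by
  have htot : ∀ k : ℕ, 0 < k → (Nat.totient k : ℝ)
      = ∑ p ∈ k.divisorsAntidiagonal, ((moebius p.1 : ℤ):ℝ) * p.2 := by
    have h := (ArithmeticFunction.sum_eq_iff_sum_mul_moebius_eq (R := ℝ)
      (f := fun i => (Nat.totient i : ℝ)) (g := fun i => (i : ℝ))).mp ?_
    · intro k hk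
      exact (h k hk).symm
    · intro m hm
      exact_mod_cast Nat.sum_totient m
  have h1 : ∑ k ∈ Finset.Icc 1 n, f ((k:ℝ)/n) * (Nat.totient k : ℝ)
      = ∑ k ∈ Finset.Icc 1 n, ∑ p ∈ k.divisorsAntidiagonal,
          ((moebius p.1 : ℤ):ℝ) * p.2 * f ((k:ℝ)/n) := by
    apply Finset.sum_congr rfl
    intro k hk
    rw [Finset.mem_Icc] at hk
    rw [htot k (by omega), Finset.mul_sum]
    apply Finset.sum_congr rfl
    intro p _
    ring
  have h2 : ∑ k ∈ Finset.Icc 1 n, ∑ p ∈ k.divisorsAntidiagonal,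
          ((moebius p.1 : ℤ):ℝ) * p.2 * f ((k:ℝ)/n)
      = ∑ d ∈ Finset.Icc 1 n, ∑ j ∈ Finset.Icc 1 (n/d),
          ((moebius d : ℤ):ℝ) * j * f ((d:ℝ)*j/n) := by
    rw [Finset.sum_sigma', Finset.sum_sigma']
    refine Finset.sum_nbij' (fun x => ⟨x.2.1, x.2.2⟩) (fun y => ⟨y.1*y.2, (y.1, y.2)⟩)
      ?_ ?_ ?_ ?_ ?_
    · rintro ⟨k, d, e⟩ hx
      simp only [Finset.mem_sigma, Finset.mem_Icc, Nat.mem_divisorsAntidiagonal] at hx ⊢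
      obtain ⟨⟨hk1, hkn⟩, hde, hk0⟩ := hx
      have hd0 : 0 < d := Nat.pos_of_ne_zero (by rintro rfl; simp at hde; omega)
      have he0 : 0 < e := Nat.pos_of_ne_zero (by rintro rfl; simp at hde; omega)
      refine ⟨⟨hd0, ?_⟩, he0, ?_⟩
      · calc d ≤ d * e := Nat.le_mul_of_pos_right d he0
          _ = k := hde
          _ ≤ n := hkn
      · rw [Nat.le_div_iff_mul_le hd0, Nat.mul_comm, hde]
        exact hkn
    · rintro ⟨d, e⟩ hy
      simp only [Finset.mem_sigma, Finset.mem_Icc, Nat.mem_divisorsAntidiagonal] at hy ⊢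
      obtain ⟨⟨hd1, hdn⟩, he1, hend⟩ := hy
      have hden : d * e ≤ n := by
        rw [Nat.le_div_iff_mul_le (by omega)] at hend
        calc d * e = e * d := Nat.mul_comm d e
          _ ≤ n := hend
      have hne : d * e ≠ 0 := Nat.mul_ne_zero (by omega) (by omega)
      exact ⟨⟨Nat.one_le_iff_ne_zero.mpr hne, hden⟩, trivial, hne⟩
    · rintro ⟨k, d, e⟩ hx
      simp only [Finset.mem_sigma, Nat.mem_divisorsAntidiagonal] at hx
      obtain ⟨_, hde, _⟩ := hx
      simp [hde]
    · rintro ⟨d, e⟩ _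
      rfl
    · rintro ⟨k, d, e⟩ hx
      simp only [Finset.mem_sigma, Nat.mem_divisorsAntidiagonal] at hx
      obtain ⟨_, hde, _⟩ := hx
      simp only
      rw [← hde]
      push_cast
      ring_nf
  rw [h1, h2]
  simp only [Finset.mul_sum]
  apply Finset.sum_congr rfl
  intro d _
  apply Finset.sum_congr rfl
  intro j _
  ring

open Filter Finset ArithmeticFunction

lemma moebius_abs_cast_le (d : ℕ) : |((moebius d : ℤ) : ℝ)| ≤ 1 := by
  have h := abs_moebius_le_one (n := d)
  exact_mod_cast h

lemma moebius_real_summable : Summable (fun d : ℕ => ((moebius d : ℤ) : ℝ) / (d:ℝ)^2) := by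
  apply Summable.of_norm_bounded (g := fun d : ℕ => 1 / (d:ℝ)^2)
    ((Real.summable_one_div_nat_pow).mpr one_lt_two)
  intro d
  rw [Real.norm_eq_abs, abs_div, abs_of_nonneg (by positivity : (0:ℝ) ≤ (d:ℝ)^2)]
  rcases Nat.eq_zero_or_pos d with rfl | hd
  · simp
  · have h0 : (0:ℝ) < (d:ℝ)^2 := by positivity
    exact div_le_div_of_nonneg_right (moebius_abs_cast_le d) h0.le  -- try gcongr


lemma moebius_hasSum : HasSum (fun d : ℕ => ((moebius d : ℤ) : ℝ) / (d:ℝ)^2) (6 / Real.pi^2) := by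
  obtain ⟨S, hS⟩ := moebius_real_summable
  have hterm : (fun d : ℕ => ((((moebius d : ℤ) : ℝ) / (d:ℝ)^2 : ℝ) : ℂ))
      = LSeries.term (fun n => ((moebius n : ℤ) : ℂ)) 2 := by
    funext d
    rcases Nat.eq_zero_or_pos d with rfl | hd
    · simp [LSeries.term]
    · rw [LSeries.term_of_ne_zero (Nat.pos_iff_ne_zero.mp hd)]
      have h2 : ((d:ℂ) : ℂ) ^ (2:ℂ) = (d:ℂ)^(2:ℕ) := by
        rw [show (2:ℂ) = ((2:ℕ):ℂ) by norm_num, Complex.cpow_natCast]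
      rw [h2]
      push_cast
      ring
  have hsC : HasSum (LSeries.term (fun n => ((moebius n : ℤ) : ℂ)) 2) ((S : ℂ)) := by
    rw [← hterm]
    exact Complex.hasSum_ofReal.mpr hS
  have hre : (1:ℝ) < (2:ℂ).re := by norm_num
  have hsum2 : LSeriesSummable (fun n => ((moebius n : ℤ) : ℂ)) 2 :=
    (LSeriesSummable_moebius_iff).mpr hre
  have hL : LSeries (fun n => ((moebius n : ℤ) : ℂ)) 2 = (S : ℂ) := hsC.tsum_eq
  have hzeta : riemannZeta 2 * LSeries (fun n => ((moebius n : ℤ) : ℂ)) 2 = 1 := by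
    rw [← LSeries_zeta_eq_riemannZeta hre]
    exact LSeries_zeta_mul_Lseries_moebius hre
  have hpi : (Real.pi : ℂ) ≠ 0 := by exact_mod_cast Real.pi_ne_zero
  have hz2 : riemannZeta 2 = (Real.pi : ℂ)^2 / 6 := riemannZeta_two
  have hSv : (S : ℂ) = 6 / (Real.pi : ℂ)^2 := by
    rw [hL, hz2] at hzeta
    field_simp at hzeta ⊢
    linear_combination hzeta
  have hfin : S = 6 / Real.pi^2 := by
    have h6 : ((6 / Real.pi^2 : ℝ) : ℂ) = 6 / (Real.pi : ℂ)^2 := by push_cast; ring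
    have : (S : ℂ) = ((6 / Real.pi^2 : ℝ) : ℂ) := by rw [hSv, h6]
    exact_mod_cast this
  rwa [hfin] at hS

theorem stmt_5 (f : ℝ → ℝ) (hf : ContinuousOn f (Set.Icc 0 1)) :
    Filter.Tendsto
      (fun n : ℕ => (1 / (n : ℝ) ^ 2) * ∑ k ∈ Finset.Icc 1 n, f ((k : ℝ) / n) * Nat.totient k)
      Filter.atTop (nhds ((6 / Real.pi ^ 2) * ∫ x in (0:ℝ)..1, x * f x)) := by
  set I : ℝ := ∫ x in (0:ℝ)..1, x * f x with hI
  set g : ℝ → ℝ := fun x => x * f x with hgdef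
  have hg : ContinuousOn g (Set.Icc 0 1) := continuousOn_id.mul hf
  set c : ℕ → ℕ → ℝ := fun n d => ((moebius d : ℤ) : ℝ)
      * (1/(n:ℝ)^2 * ∑ j ∈ Finset.Icc 1 (n/d), (j:ℝ) * f ((d:ℝ)*j/n)) with hc
  set L : ℕ → ℝ := fun d => ((moebius d : ℤ) : ℝ) / (d:ℝ)^2 * I with hL
  -- bound on f
  obtain ⟨C, hC⟩ := isCompact_Icc.exists_bound_of_continuousOn hf
  have hC0 : 0 ≤ C := le_trans (norm_nonneg _) (hC 0 (by constructor <;> norm_num))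
  -- c vanishes outside Icc 1 n
  have hvanish : ∀ n : ℕ, ∀ d ∉ Finset.Icc 1 n, c n d = 0 := by
    intro n d hd
    rw [Finset.mem_Icc] at hd
    push_neg at hd
    rcases Nat.eq_zero_or_pos d with rfl | hd1
    · simp [hc]
    · have hdn : n < d := hd hd1
      have : n / d = 0 := Nat.div_eq_of_lt hdn
      simp [hc, this]
  -- the sequence equals the tsum of c
  have hseq : ∀ n : ℕ,
      (1 / (n : ℝ) ^ 2) * ∑ k ∈ Finset.Icc 1 n, f ((k : ℝ) / n) * Nat.totient k
      = ∑' d, c n d := by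
    intro n
    rw [key_identity f n, tsum_eq_sum (hvanish n)]
  -- pointwise convergence
  have hab : ∀ d : ℕ, Tendsto (fun n => c n d) atTop (nhds (L d)) := by
    intro d
    rcases Nat.eq_zero_or_pos d with rfl | hd1
    · have h0 : (fun n => c n 0) = fun _ => (0:ℝ) := by funext n; simp [hc]
      have hL0 : L 0 = 0 := by simp [hL]
      rw [h0, hL0]
      exact tendsto_const_nhds
    · have hrie := riemann_sum_tendsto g hg d hd1
      have heq : ∀ n : ℕ, c n d = ((moebius d : ℤ) : ℝ) * ((1/(d:ℝ)^2)
          * (((d:ℝ)/n) * ∑ j ∈ Finset.Icc 1 (n/d), g ((j:ℝ)*d/n))) := by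
        intro n
        rcases Nat.eq_zero_or_pos n with rfl | hn1
        · simp [hc]
        · have hn0 : ((n:ℝ)) ≠ 0 := by positivity
          have hd0 : ((d:ℝ)) ≠ 0 := by positivity
          rw [hc]
          congr 1
          simp only [Finset.mul_sum]
          apply Finset.sum_congr rfl
          intro j _
          simp only [hgdef]
          rw [show (j:ℝ)*d/n = d*j/n by ring]
          field_simp
      have hlim : Tendsto (fun n => ((moebius d : ℤ) : ℝ) * ((1/(d:ℝ)^2)
          * (((d:ℝ)/n) * ∑ j ∈ Finset.Icc 1 (n/d), g ((j:ℝ)*d/n)))) atTop (nhds (L d)) := by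
        have := (hrie.const_mul ((1:ℝ)/(d:ℝ)^2)).const_mul ((moebius d : ℤ) : ℝ)
        convert this using 2
        rw [hL]
        ring
      exact (tendsto_congr heq).mpr hlim
  -- uniform bound
  have h_bound : ∀ᶠ n in atTop, ∀ d, |c n d| ≤ C * (1/(d:ℝ)^2) := by
    filter_upwards [eventually_ge_atTop 1] with n hn
    intro d
    rcases Nat.eq_zero_or_pos d with rfl | hd1
    · simp [hc]
    · have hn0 : (0:ℝ) < n := by exact_mod_cast hn
      set M := n / d with hM
      have hMd : (M:ℝ) * d ≤ n := by exact_mod_cast Nat.div_mul_le_self n d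
      have habs : |∑ j ∈ Finset.Icc 1 M, (j:ℝ) * f ((d:ℝ)*j/n)| ≤ (M:ℝ) * ((M:ℝ) * C) := by
        calc |∑ j ∈ Finset.Icc 1 M, (j:ℝ) * f ((d:ℝ)*j/n)|
            ≤ ∑ j ∈ Finset.Icc 1 M, |(j:ℝ) * f ((d:ℝ)*j/n)| := Finset.abs_sum_le_sum_abs _ _
          _ ≤ ∑ _j ∈ Finset.Icc 1 M, (M:ℝ) * C := by
              apply Finset.sum_le_sum
              intro j hj
              rw [Finset.mem_Icc] at hj
              have hjd : (j:ℝ) * d ≤ n := by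
                calc (j:ℝ) * d ≤ (M:ℝ) * d := by
                      apply mul_le_mul_of_nonneg_right _ (by positivity)
                      exact_mod_cast hj.2
                  _ ≤ n := hMd
              have harg : (d:ℝ)*j/n ∈ Set.Icc (0:ℝ) 1 := by
                constructor
                · positivity
                · rw [div_le_one hn0]; linarith [hjd]
              rw [abs_mul, abs_of_nonneg (by positivity : (0:ℝ) ≤ (j:ℝ))]
              apply mul_le_mul
              · exact_mod_cast hj.2
              · rw [← Real.norm_eq_abs]; exact hC _ harg
              · exact abs_nonneg _
              · positivity
          _ = (M:ℝ) * ((M:ℝ) * C) := by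
              rw [Finset.sum_const, Nat.card_Icc]
              simp
      have hmu : |((moebius d : ℤ) : ℝ)| ≤ 1 := moebius_abs_cast_le d
      calc |c n d| = |((moebius d : ℤ) : ℝ)|
            * |1/(n:ℝ)^2 * ∑ j ∈ Finset.Icc 1 M, (j:ℝ) * f ((d:ℝ)*j/n)| := by
              rw [hc]; rw [abs_mul]
        _ ≤ 1 * |1/(n:ℝ)^2 * ∑ j ∈ Finset.Icc 1 M, (j:ℝ) * f ((d:ℝ)*j/n)| :=
              mul_le_mul_of_nonneg_right hmu (abs_nonneg _)
        _ = |1/(n:ℝ)^2| * |∑ j ∈ Finset.Icc 1 M, (j:ℝ) * f ((d:ℝ)*j/n)| := by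
              rw [one_mul, abs_mul]
        _ ≤ 1/(n:ℝ)^2 * ((M:ℝ) * ((M:ℝ) * C)) := by
              rw [abs_of_nonneg (by positivity : (0:ℝ) ≤ 1/(n:ℝ)^2)]
              exact mul_le_mul_of_nonneg_left habs (by positivity)
        _ ≤ C * (1/(d:ℝ)^2) := by
              have hd0 : (0:ℝ) < (d:ℝ) := by exact_mod_cast hd1
              rw [div_mul_eq_mul_div, one_mul, div_le_iff₀ (by positivity : (0:ℝ) < (n:ℝ)^2),
                mul_comm C _, mul_assoc]
              have hM2 : (M:ℝ)^2 * (d:ℝ)^2 ≤ (n:ℝ)^2 := by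
                have := mul_le_mul_of_nonneg_left hMd (by positivity : (0:ℝ) ≤ (M:ℝ)*d)
                nlinarith [hMd, mul_nonneg (Nat.cast_nonneg M) hd0.le]
              calc (M:ℝ) * ((M:ℝ) * C) = (M:ℝ)^2 * C := by ring
                _ ≤ ((n:ℝ)^2 / (d:ℝ)^2) * C := by
                    apply mul_le_mul_of_nonneg_right _ hC0
                    rw [le_div_iff₀ (by positivity : (0:ℝ) < (d:ℝ)^2)]
                    exact hM2
                _ = 1/(d:ℝ)^2 * (C * (n:ℝ)^2) := by ring
  -- summable bound
  have h_sum : Summable (fun d : ℕ => C * (1/(d:ℝ)^2)) :=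
    ((Real.summable_one_div_nat_pow).mpr one_lt_two).mul_left C
  -- Tannery
  have htan : Tendsto (fun n => ∑' d, c n d) atTop (nhds (∑' d, L d)) := by
    apply tendsto_tsum_of_dominated_convergence h_sum hab
    filter_upwards [h_bound] with n hb d
    rw [Real.norm_eq_abs]
    exact hb d
  -- value of the limit
  have hval : (∑' d, L d) = (6 / Real.pi ^ 2) * I := by
    rw [hL]
    rw [tsum_mul_right, moebius_hasSum.tsum_eq]
  rw [← hval]
  exact (tendsto_congr hseq).mpr htan
end

section
/- For every continuous function f on [0,1], (1/n²) ∑_{k=1}^n f(k/n) σ(k) converges to (π²/6) ∫_0^1 x f(x) dx. -/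
open Filter Finset intervalIntegral Topology



lemma swap_div (n : ℕ) (g : ℕ → ℕ → ℝ) :
    ∑ k ∈ Icc 1 n, ∑ d ∈ k.divisors, g k d
      = ∑ m ∈ Icc 1 n, ∑ d ∈ Icc 1 (n / m), g (d * m) d := by
  rw [Finset.sum_sigma', Finset.sum_sigma']
  apply Finset.sum_nbij' (fun p => ⟨p.1 / p.2, p.2⟩) (fun p => ⟨p.2 * p.1, p.2⟩)
  · rintro ⟨k, d⟩ h
    simp only [Finset.mem_sigma, Finset.mem_Icc, Nat.mem_divisors] at h ⊢
    obtain ⟨⟨hk1, hkn⟩, hd, hk0⟩ := h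
    have hd0 : 0 < d := Nat.pos_of_dvd_of_pos hd (by omega)
    refine ⟨⟨Nat.div_pos (Nat.le_of_dvd (by omega) hd) hd0, le_trans (Nat.div_le_self _ _) hkn⟩, hd0, ?_⟩
    rw [Nat.le_div_iff_mul_le (Nat.div_pos (Nat.le_of_dvd (by omega) hd) hd0)]
    rw [Nat.mul_div_cancel' hd] at *
    exact hkn
  · rintro ⟨m, d⟩ h
    simp only [Finset.mem_sigma, Finset.mem_Icc, Nat.mem_divisors] at h ⊢
    obtain ⟨⟨hm1, hmn⟩, hd1, hdn⟩ := h
    refine ⟨⟨Nat.mul_pos (by omega) (by omega), ?_⟩, ⟨m, rfl⟩, (by have := Nat.mul_pos (show 0 < d by omega) (show 0 < m by omega); omega)⟩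
    calc d * m ≤ (n / m) * m := by exact Nat.mul_le_mul_right m hdn
    _ ≤ n := Nat.div_mul_le_self n m
  · rintro ⟨k, d⟩ h
    simp only [Finset.mem_sigma, Finset.mem_Icc, Nat.mem_divisors] at h
    simp [Nat.div_mul_cancel h.2.1, Nat.mul_div_cancel' h.2.1]
  · rintro ⟨m, d⟩ h
    simp only [Finset.mem_sigma, Finset.mem_Icc, Nat.mem_divisors] at h
    have hm : 0 < m := by omega
    simp [Nat.mul_div_cancel_left _ (by omega : 0 < d)]
  · rintro ⟨k, d⟩ h
    simp only [Finset.mem_sigma, Finset.mem_Icc, Nat.mem_divisors] at h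
    show g k d = g (d * (k / d)) d
    rw [Nat.mul_div_cancel' h.2.1]



lemma riemann (h : ℝ → ℝ) (hh : Continuous h) (m : ℕ) (hm : 1 ≤ m) :
    Tendsto (fun n : ℕ => ((m : ℝ) / n) * ∑ d ∈ Icc 1 (n / m), h ((d : ℝ) * m / n)) atTop
      (𝓝 (∫ x in (0:ℝ)..1, h x)) := by
  obtain ⟨C, hC⟩ := isCompact_Icc.exists_bound_of_continuousOn (hh.continuousOn (s := Set.Icc (0:ℝ) 1))
  have hC0 : 0 ≤ C := le_trans (norm_nonneg _) (hC 0 (by norm_num))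
  rw [Metric.tendsto_atTop]
  intro ε hε
  have hu : UniformContinuousOn h (Set.Icc 0 1) :=
    isCompact_Icc.uniformContinuousOn_of_continuous hh.continuousOn
  rw [Metric.uniformContinuousOn_iff] at hu
  obtain ⟨δ₀, hδ₀, hud⟩ := hu (ε/2) (by positivity)
  set η : ℝ := min δ₀ (min 1 (ε / (2 * (C + 1)))) with hη
  have hη0 : 0 < η := by
    apply lt_min hδ₀; apply lt_min one_pos; positivity
  obtain ⟨n₀, hn₀⟩ := exists_nat_gt ((m : ℝ) / η)
  refine ⟨n₀ + 1, fun n hn => ?_⟩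
  have hn1 : 1 ≤ n := by omega
  have hnpos : (0:ℝ) < n := by exact_mod_cast Nat.pos_of_ne_zero (by omega)
  have hmn : (m : ℝ) / n < η := by
    rw [div_lt_iff₀ hnpos]
    calc (m:ℝ) = (m / η) * η := by field_simp
    _ < n₀ * η := by exact mul_lt_mul_of_pos_right hn₀ hη0
    _ ≤ n * η := by
        apply mul_le_mul_of_nonneg_right _ hη0.le
        exact_mod_cast (by omega : n₀ ≤ n)
    _ = η * n := mul_comm _ _
  set δ : ℝ := (m : ℝ) / n with hδdef
  have hδpos : 0 < δ := by positivity
  set N : ℕ := n / m with hN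
  have hδlt1 : δ < 1 := lt_of_lt_of_le hmn (le_trans (min_le_right _ _) (min_le_left _ _))
  have hmltn : m < n := by
    by_contra hc
    push_neg at hc
    have : (1:ℝ) ≤ δ := by
      rw [le_div_iff₀ hnpos]; exact_mod_cast by omega
    linarith
  have hNm : (N : ℝ) * m ≤ n := by exact_mod_cast Nat.div_mul_le_self n m
  have hNδ1 : (N : ℝ) * δ ≤ 1 := by
    rw [hδdef, mul_div_assoc']; exact div_le_one_of_le₀ hNm hnpos.le
  have hNlow : (1 : ℝ) - δ < N * δ := by
    have h1 : n < (N + 1) * m := by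
      rw [hN]
      exact (Nat.div_lt_iff_lt_mul (by omega)).mp (Nat.lt_succ_self _)
    have h2 : (n : ℝ) < (N + 1) * m := by exact_mod_cast h1
    have h3 : (1:ℝ) < (N:ℝ) * δ + δ := by
      rw [hδdef, mul_div_assoc', ← add_div, lt_div_iff₀ hnpos, one_mul]
      nlinarith [h2]
    linarith
  have hint : ∀ a b : ℝ, IntervalIntegrable h MeasureTheory.volume a b :=
    fun a b => hh.intervalIntegrable a b
  have hadj : ∑ i ∈ range N, ∫ x in ((i:ℝ) * δ)..(((i:ℝ)+1) * δ), h x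
      = ∫ x in (0:ℝ)..((N:ℝ) * δ), h x := by
    have := intervalIntegral.sum_integral_adjacent_intervals
      (a := fun i : ℕ => (i:ℝ) * δ) (n := N) (fun k _ => hint _ _)
    simp only [Nat.cast_zero, zero_mul] at this
    rw [← this]
    apply Finset.sum_congr rfl
    intro i _
    push_cast
    ring_nf
  have hsum : δ * ∑ d ∈ Icc 1 N, h ((d : ℝ) * m / n)
      = ∑ i ∈ range N, δ * h (((i:ℝ)+1) * δ) := by
    rw [Finset.mul_sum, ← Finset.Ico_add_one_right_eq_Icc, Finset.sum_Ico_eq_sum_range]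
    apply Finset.sum_congr (by norm_num)
    intro i _
    congr 1
    rw [hδdef]
    push_cast
    ring
  have hterm : ∀ i ∈ range N,
      |δ * h (((i:ℝ)+1) * δ) - ∫ x in ((i:ℝ) * δ)..(((i:ℝ)+1) * δ), h x| ≤ δ * (ε/2) := by
    intro i hi
    have hiN : i + 1 ≤ N := by simpa [Nat.succ_le_iff] using Finset.mem_range.mp hi
    set c : ℝ := ((i:ℝ)+1) * δ with hc
    have hle : (i:ℝ) * δ ≤ c := by nlinarith [hδpos]
    have hcI : c ∈ Set.Icc (0:ℝ) 1 := by
      constructor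
      · positivity
      · calc c ≤ (N:ℝ) * δ := by
              apply mul_le_mul_of_nonneg_right _ hδpos.le
              exact_mod_cast hiN
          _ ≤ 1 := hNδ1
    have heq : δ * h c - ∫ x in ((i:ℝ) * δ)..c, h x
        = ∫ x in ((i:ℝ) * δ)..c, (h c - h x) := by
      rw [intervalIntegral.integral_sub (intervalIntegrable_const) (hint _ _),
        intervalIntegral.integral_const, smul_eq_mul]
      ring
    rw [heq]
    have := intervalIntegral.norm_integral_le_of_norm_le_const
      (C := ε/2) (f := fun x => h c - h x) (a := (i:ℝ) * δ) (b := c) ?_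
    · rw [Real.norm_eq_abs] at this
      refine le_trans this ?_
      have : |c - (i:ℝ)*δ| = δ := by
        rw [abs_of_nonneg (by linarith)]; rw [hc]; ring
      rw [this]; apply le_of_eq; ring
    · intro x hx
      rw [Set.uIoc_of_le hle] at hx
      obtain ⟨hx1, hx2⟩ := hx
      have hxI : x ∈ Set.Icc (0:ℝ) 1 := by
        constructor
        · have : (0:ℝ) ≤ (i:ℝ) * δ := by positivity
          linarith
        · exact le_trans hx2 hcI.2
      have hdist : dist c x < δ₀ := by
        rw [Real.dist_eq, abs_of_nonneg (by linarith)]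
        have : c - x < δ := by nlinarith
        linarith [le_trans hmn.le (min_le_left δ₀ _)]
      have := hud c hcI x hxI hdist
      rw [Real.dist_eq] at this
      rw [Real.norm_eq_abs]
      exact this.le
  have key : |δ * ∑ d ∈ Icc 1 N, h ((d : ℝ) * m / n) - ∫ x in (0:ℝ)..((N:ℝ) * δ), h x|
      ≤ ε / 2 := by
    rw [hsum, ← hadj, ← Finset.sum_sub_distrib]
    refine le_trans (Finset.abs_sum_le_sum_abs _ _) ?_
    refine le_trans (Finset.sum_le_sum hterm) ?_
    rw [Finset.sum_const, card_range, nsmul_eq_mul]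
    calc (N:ℝ) * (δ * (ε/2)) = ((N:ℝ) * δ) * (ε/2) := by ring
      _ ≤ 1 * (ε/2) := by
          apply mul_le_mul_of_nonneg_right hNδ1 (by positivity)
      _ = ε / 2 := by ring
  have tail : |(∫ x in (0:ℝ)..((N:ℝ) * δ), h x) - ∫ x in (0:ℝ)..1, h x| ≤ C * δ := by
    have hsplit := intervalIntegral.integral_add_adjacent_intervals
      (a := (0:ℝ)) (b := (N:ℝ)*δ) (c := 1) (hint _ _) (hint _ _)
    have h1 : (∫ x in (0:ℝ)..((N:ℝ) * δ), h x) - ∫ x in (0:ℝ)..1, h x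
        = -(∫ x in ((N:ℝ)*δ)..1, h x) := by rw [← hsplit]; ring
    rw [h1, abs_neg]
    have := intervalIntegral.norm_integral_le_of_norm_le_const
      (C := C) (f := h) (a := (N:ℝ)*δ) (b := 1) ?_
    · rw [Real.norm_eq_abs] at this
      refine le_trans this ?_
      have : |1 - (N:ℝ)*δ| ≤ δ := by
        rw [abs_of_nonneg (by linarith)]; linarith
      nlinarith
    · intro x hx
      have hNδ0 : (0:ℝ) ≤ (N:ℝ)*δ := by positivity
      rw [Set.uIoc_of_le hNδ1] at hx
      exact hC x ⟨by linarith [hx.1], hx.2⟩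
  -- conclude
  have hδη : (C+1) * δ < ε / 2 := by
    have hδlt : δ < ε / (2 * (C + 1)) :=
      lt_of_lt_of_le hmn (le_trans (min_le_right _ _) (min_le_right _ _))
    rw [lt_div_iff₀ (show (0:ℝ) < 2*(C+1) by positivity)] at hδlt
    have hr : δ * (2*(C+1)) = 2 * ((C+1) * δ) := by ring
    linarith
  simp only [Real.dist_eq]
  have : |δ * ∑ d ∈ Icc 1 N, h ((d : ℝ) * m / n) - ∫ x in (0:ℝ)..1, h x| < ε := by
    calc |δ * ∑ d ∈ Icc 1 N, h ((d : ℝ) * m / n) - ∫ x in (0:ℝ)..1, h x|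
        ≤ |δ * ∑ d ∈ Icc 1 N, h ((d : ℝ) * m / n) - ∫ x in (0:ℝ)..((N:ℝ) * δ), h x|
          + |(∫ x in (0:ℝ)..((N:ℝ) * δ), h x) - ∫ x in (0:ℝ)..1, h x| := by
          apply abs_sub_le
      _ ≤ ε/2 + C * δ := add_le_add key tail
      _ < ε := by
          have h9 : C * δ ≤ (C+1) * δ := by
            have : (C+1) * δ - C * δ = δ := by ring
            linarith
          linarith
  exact this



theorem stmt_7 (f : ℝ → ℝ) (hf : ContinuousOn f (Set.Icc 0 1)) :
    Filter.Tendsto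
      (fun n : ℕ => (1 / (n : ℝ) ^ 2) * ∑ k ∈ Finset.Icc 1 n, f ((k : ℝ) / n) * (ArithmeticFunction.sigma 1 k : ℝ))
      Filter.atTop (nhds ((Real.pi ^ 2 / 6) * ∫ x in (0:ℝ)..1, x * f x)) := by
  -- continuous extension of f
  set F : ℝ → ℝ := Set.IccExtend zero_le_one ((Set.Icc (0:ℝ) 1).restrict f) with hFdef
  have hFc : Continuous F := hf.restrict.Icc_extend'
  have hFeq : ∀ x ∈ Set.Icc (0:ℝ) 1, F x = f x := fun x hx => by
    rw [hFdef, Set.IccExtend_of_mem _ _ hx]; rfl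
  set h : ℝ → ℝ := fun x => x * F x with hhdef
  have hhc : Continuous h := continuous_id.mul hFc
  set I : ℝ := ∫ x in (0:ℝ)..1, h x with hI
  have hIf : I = ∫ x in (0:ℝ)..1, x * f x := by
    apply intervalIntegral.integral_congr
    intro x hx
    rw [Set.uIcc_of_le zero_le_one] at hx
    simp only [hhdef]
    rw [hFeq x hx]
  -- bound
  obtain ⟨C, hC⟩ := isCompact_Icc.exists_bound_of_continuousOn
    (hhc.continuousOn (s := Set.Icc (0:ℝ) 1))
  have hC0 : 0 ≤ C := le_trans (norm_nonneg _) (hC 0 (by norm_num))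
  set G : ℕ → ℕ → ℝ := fun n m =>
    (1/(m:ℝ)^2) * (((m:ℝ)/n) * ∑ d ∈ Icc 1 (n/m), h ((d:ℝ) * m / n)) with hG
  have hGzero : ∀ n : ℕ, ∀ m ∉ Icc 1 n, G n m = 0 := by
    intro n m hm
    simp only [Finset.mem_Icc, not_and_or, not_le] at hm
    rcases hm with hm | hm
    · interval_cases m
      simp [hG]
    · have : n / m = 0 := Nat.div_eq_of_lt hm
      simp [hG, this]
  -- equality with the original sum
  have horig : ∀ n : ℕ, 1 ≤ n →
      (1 / (n : ℝ) ^ 2) * ∑ k ∈ Finset.Icc 1 n, f ((k : ℝ) / n) * (ArithmeticFunction.sigma 1 k : ℝ)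
        = ∑' m, G n m := by
    intro n hn
    have hn0 : (n:ℝ) ≠ 0 := Nat.cast_ne_zero.mpr (by omega)
    rw [tsum_eq_sum (hGzero n)]
    rw [Finset.mul_sum]
    have step1 : ∀ k ∈ Icc 1 n,
        (1/(n:ℝ)^2) * (f ((k : ℝ) / n) * (ArithmeticFunction.sigma 1 k : ℝ))
          = ∑ d ∈ k.divisors, (1/(n:ℝ)^2) * (f ((k:ℝ)/n) * d) := by
      intro k hk
      rw [ArithmeticFunction.sigma_one_apply, ← Finset.mul_sum, ← Finset.mul_sum]
      push_cast
      ring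
    rw [Finset.sum_congr rfl step1,
      swap_div n (fun k d => (1/(n:ℝ)^2) * (f ((k:ℝ)/n) * d))]
    apply Finset.sum_congr rfl
    intro m hm
    rw [Finset.mem_Icc] at hm
    have hm0 : (m:ℝ) ≠ 0 := Nat.cast_ne_zero.mpr (by omega)
    rw [hG]
    simp only
    rw [Finset.mul_sum, Finset.mul_sum]
    apply Finset.sum_congr rfl
    intro d hd
    rw [Finset.mem_Icc] at hd
    have hdm : d * m ≤ n := le_trans (Nat.mul_le_mul_right m hd.2) (Nat.div_mul_le_self n m)
    have harg : (((d * m : ℕ) : ℝ))/n = (d:ℝ) * m / n := by push_cast; ring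
    have hmem : (d:ℝ) * m / n ∈ Set.Icc (0:ℝ) 1 := by
      constructor
      · positivity
      · rw [div_le_one (by positivity)]
        exact_mod_cast hdm
    rw [harg]
    simp only [hhdef]
    rw [hFeq _ hmem]
    field_simp
  -- pointwise limits
  have hriem : ∀ m : ℕ, Tendsto (fun n : ℕ => G n m) atTop (𝓝 ((1/(m:ℝ)^2) * I)) := by
    intro m
    rcases Nat.eq_zero_or_pos m with rfl | hm
    · simpa [hG] using tendsto_const_nhds (α := ℝ) (x := (0:ℝ)) (f := atTop (α := ℕ))
    · exact (riemann h hhc m hm).const_mul _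
  -- domination
  have hbound : ∀ᶠ n : ℕ in atTop, ∀ m : ℕ, ‖G n m‖ ≤ C * (1/(m:ℝ)^2) := by
    filter_upwards [eventually_ge_atTop 1] with n hn
    intro m
    rcases Nat.eq_zero_or_pos m with rfl | hm
    · simp [hG]
    · have hnpos : (0:ℝ) < n := by exact_mod_cast Nat.pos_of_ne_zero (by omega)
      have hsum_le : ‖∑ d ∈ Icc 1 (n/m), h ((d:ℝ)*m/n)‖ ≤ ((n/m : ℕ) : ℝ) * C := by
        refine le_trans (norm_sum_le _ _) ?_
        have hterm : ∀ d ∈ Icc 1 (n/m), ‖h ((d:ℝ)*m/n)‖ ≤ C := by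
          intro d hd
          rw [Finset.mem_Icc] at hd
          apply hC
          constructor
          · positivity
          · rw [div_le_one hnpos]
            exact_mod_cast le_trans (Nat.mul_le_mul_right m hd.2) (Nat.div_mul_le_self n m)
        refine le_trans (Finset.sum_le_sum hterm) ?_
        rw [Finset.sum_const, Nat.card_Icc, nsmul_eq_mul]
        simp
      have hkey : ((m:ℝ)/n) * ((n/m : ℕ) : ℝ) ≤ 1 := by
        rw [div_mul_eq_mul_div, div_le_one hnpos, mul_comm]
        exact_mod_cast Nat.div_mul_le_self n m
      have hGnorm : ‖G n m‖ = (1/(m:ℝ)^2) * (((m:ℝ)/n) * ‖∑ d ∈ Icc 1 (n/m), h ((d:ℝ)*m/n)‖) := by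
        rw [hG]
        simp only
        rw [norm_mul, norm_mul, Real.norm_eq_abs (1/(m:ℝ)^2), Real.norm_eq_abs ((m:ℝ)/n),
          abs_of_nonneg (by positivity : (0:ℝ) ≤ 1/(m:ℝ)^2),
          abs_of_nonneg (by positivity : (0:ℝ) ≤ (m:ℝ)/n)]
      rw [hGnorm]
      calc (1/(m:ℝ)^2) * (((m:ℝ)/n) * ‖∑ d ∈ Icc 1 (n/m), h ((d:ℝ)*m/n)‖)
          ≤ (1/(m:ℝ)^2) * (((m:ℝ)/n) * (((n/m : ℕ) : ℝ) * C)) := by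
            apply mul_le_mul_of_nonneg_left _ (by positivity)
            apply mul_le_mul_of_nonneg_left hsum_le (by positivity)
        _ = (((m:ℝ)/n) * ((n/m : ℕ) : ℝ)) * (C * (1/(m:ℝ)^2)) := by ring
        _ ≤ C * (1/(m:ℝ)^2) := mul_le_of_le_one_left (by positivity) hkey
  have hsummable : Summable (fun m : ℕ => C * (1/(m:ℝ)^2)) := by
    apply Summable.mul_left
    exact_mod_cast Real.summable_one_div_nat_pow.mpr one_lt_two
  have hmain := tendsto_tsum_of_dominated_convergence hsummable hriem hbound
  have hg : ∑' m : ℕ, (1/(m:ℝ)^2) * I = (Real.pi^2/6) * I := by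
    rw [tsum_mul_right, hasSum_zeta_two.tsum_eq]
  rw [hg, hIf] at hmain
  refine Tendsto.congr' ?_ hmain
  filter_upwards [eventually_ge_atTop 1] with n hn
  exact (horig n hn).symm
end
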